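/- arXiv:math/0112234 — 4 statements merged into one kernel-verified Lean document; each statement's English description precedes it below -/
import Mathlib

section
/- Let X be simple random walk on ℤ² started at a vertex u_1, stopped on first exiting a finite domain D, and let k be the last time n with X(n) = u_1. Then the path (X(k+j))_{j≥0} after the last visit to u_1 is independent of the initial segment X[0,k]. -/
open scoped ENNReal Classical

/-- Vertices of the grid `ℤ²`. -/
abbrev V2 : Type := ℤ × ℤ

/-- Grid adjacency in `ℤ²`. -/
def gadj (p q : V2) : Prop := (p.1 - q.1).natAbs + (p.2 - q.2).natAbs = 1

instance : DecidableRel gadj := fun p q => by unfold gadj; infer_instance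

/-- Probability weight of a nearest-neighbor path of simple random walk on `ℤ²`:
`(1/4)^(number of steps)` if all steps are nearest-neighbor steps, and `0` otherwise. -/
noncomputable def wt (w : List V2) : ℝ≥0∞ :=
  if List.Chain' gadj w then (4 : ℝ≥0∞)⁻¹ ^ (w.length - 1) else 0

/-- `w` is a path of simple random walk started at `a` and stopped upon first exiting the
finite domain `D`: every vertex but the last lies in `D` and the last vertex is outside `D`. -/
def IsStoppedWalk (D : Finset V2) (a : V2) (w : List V2) : Prop :=
  w.head? = some a ∧ (∀ x ∈ w.dropLast, x ∈ D) ∧ (∀ z, w.getLast? = some z → z ∉ D)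

/-- Probability (total weight) of the set of stopped walks from `a` in `D` satisfying `E`. -/
noncomputable def prW (D : Finset V2) (a : V2) (E : List V2 → Prop) : ℝ≥0∞ :=
  ∑' w : List V2, if IsStoppedWalk D a w ∧ E w then wt w else 0

/-- Green's function `G_D(a,v)`: expected number of visits to `v` by simple random walk
started at `a` and stopped upon exiting `D`. -/
noncomputable def green (D : Finset V2) (a v : V2) : ℝ≥0∞ :=
  ∑' w : List V2, if IsStoppedWalk D a w then wt w * (w.count v : ℝ≥0∞) else 0

/-- `H_D(v,u)`: probability that simple random walk started at `v`, stopped at its first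
exit from `D`, visits `u`. -/
noncomputable def hitPr (D : Finset V2) (v u : V2) : ℝ≥0∞ :=
  prW D v (fun w => u ∈ w)

/-- The strict suffix of `w` after the last occurrence of `u`. -/
def afterLast (u : V2) (w : List V2) : List V2 :=
  (w.reverse.takeWhile (fun y => y ≠ u)).reverse

/-- The part of the walk from the last visit to `u` on (including that visit). -/
def sufLast (u : V2) (w : List V2) : List V2 := u :: afterLast u w

/-- The initial part of the walk up to (and including) the last visit to `u`. -/
def preLast (u : V2) (w : List V2) : List V2 :=
  w.take (w.length - (afterLast u w).length)

lemma takeWhile_append_all {α : Type*} (f : α → Bool) (l1 l2 : List α) (h : ∀ x ∈ l1, f x) :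
    List.takeWhile f (l1 ++ l2) = l1 ++ List.takeWhile f l2 := by
  induction l1 with
  | nil => simp
  | cons a t ih => simp_all [List.takeWhile_cons]

lemma dropWhile_rev_append (u : V2) (w : List V2) :
    (w.reverse.dropWhile (fun y => y ≠ u)).reverse ++ afterLast u w = w := by
  rw [afterLast, ← List.reverse_append, List.takeWhile_append_dropWhile, List.reverse_reverse]

lemma preLast_eq (u : V2) (w : List V2) :
    preLast u w = (w.reverse.dropWhile (fun y => y ≠ u)).reverse := by
  have hsplit := dropWhile_rev_append u w
  unfold preLast
  set a := afterLast u w with ha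
  set d := (w.reverse.dropWhile (fun y => y ≠ u)).reverse with hd
  have hlen : w.length - a.length = d.length := by rw [← hsplit]; simp
  rw [hlen, ← hsplit, List.take_left]

lemma preLast_append_afterLast (u : V2) (w : List V2) :
    preLast u w ++ afterLast u w = w := by
  rw [preLast_eq]; exact dropWhile_rev_append u w

lemma not_mem_afterLast (u : V2) (w : List V2) : u ∉ afterLast u w := by
  intro h
  rw [afterLast, List.mem_reverse] at h
  have := List.mem_takeWhile_imp h
  simp at this

lemma getLast?_preLast {u : V2} {w : List V2} (h : u ∈ w) :
    (preLast u w).getLast? = some u := by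
  rw [preLast_eq, List.getLast?_reverse]
  have h1 : w.reverse.find? (fun y => decide (y = u)) =
      (w.reverse.dropWhile (fun y => y ≠ u)).head? := by
    have := List.find?_not_eq_head?_dropWhile
      (p := fun y : V2 => (decide (y ≠ u) : Bool)) (l := w.reverse)
    convert this using 2
    simp
  have hmem : u ∈ w.reverse := by simpa using h
  have hsome : (w.reverse.find? (fun y => decide (y = u))).isSome := by
    rw [List.find?_isSome]
    exact ⟨u, hmem, by simp⟩
  obtain ⟨a, ha⟩ := Option.isSome_iff_exists.mp hsome
  have := List.find?_some ha
  simp at this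
  subst this
  rw [← h1, ha]

lemma afterLast_append {u : V2} {p t : List V2} (hp : p.getLast? = some u)
    (ht : ∀ x ∈ t, x ≠ u) : afterLast u (p ++ t) = t := by
  have hpr : p.reverse.head? = some u := by rwa [List.head?_reverse]
  obtain ⟨r, hr⟩ : ∃ r, p.reverse = u :: r := by
    cases hpr' : p.reverse with
    | nil => simp [hpr'] at hpr
    | cons a r => rw [hpr'] at hpr; simp at hpr; exact ⟨r, by rw [hpr]⟩
  rw [afterLast, List.reverse_append, hr,
    takeWhile_append_all _ _ _ (by intro x hx; simpa using ht x (by simpa using hx))]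
  simp [List.takeWhile_cons]

lemma preLast_append {u : V2} {p t : List V2} (hp : p.getLast? = some u)
    (ht : ∀ x ∈ t, x ≠ u) : preLast u (p ++ t) = p := by
  rw [preLast, afterLast_append hp ht]
  simp [List.take_left]

-- ===== walk decomposition lemmas =====

section
variable (D : Finset V2) (u : V2)

def Pp (p : List V2) : Prop :=
  p.head? = some u ∧ p.getLast? = some u ∧ ∀ x ∈ p, x ∈ D

def Qp (q : List V2) : Prop :=
  IsStoppedWalk D u q ∧ ∀ x ∈ q.tail, x ≠ u

variable {D u}

lemma wt_append {p t : List V2} (hp : p.getLast? = some u) :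
    wt (p ++ t) = wt p * wt (u :: t) := by
  have hpne : p ≠ [] := by rintro rfl; simp at hp
  have hchain : List.Chain' gadj (p ++ t) ↔
      List.Chain' gadj p ∧ List.Chain' gadj (u :: t) := by
    unfold List.Chain'
    rw [List.isChain_append, List.isChain_cons, hp]
    simp only [Option.mem_def, Option.some.injEq]
    constructor
    · rintro ⟨c1, c2, c3⟩
      exact ⟨c1, fun y hy => c3 u rfl y hy, c2⟩
    · rintro ⟨c1, c4, c2⟩
      exact ⟨c1, c2, fun x hx y hy => hx ▸ c4 y hy⟩
  unfold wt
  by_cases h1 : List.Chain' gadj p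
  · by_cases h2 : List.Chain' gadj (u :: t)
    · rw [if_pos (hchain.mpr ⟨h1, h2⟩), if_pos h1, if_pos h2, ← pow_add]
      congr 1
      have : 1 ≤ p.length := List.length_pos_iff.mpr hpne
      simp only [List.length_append, List.length_cons]
      omega
    · rw [if_neg (fun h => h2 (hchain.mp h).2), if_neg h2, mul_zero]
  · rw [if_neg (fun h => h1 (hchain.mp h).1), if_neg h1, zero_mul]

/-- Gluing: from `Pp p` and `Qp q`, `p ++ q.tail` is a stopped walk decomposing as `(p, q)`. -/
lemma glue (hu : u ∈ D) {p q : List V2} (hP : Pp D u p) (hQ : Qp D u q) :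
    IsStoppedWalk D u (p ++ q.tail) ∧ preLast u (p ++ q.tail) = p ∧
      sufLast u (p ++ q.tail) = q ∧ wt (p ++ q.tail) = wt p * wt q := by
  obtain ⟨hph, hpl, hpD⟩ := hP
  obtain ⟨⟨hqh, hqD, hql⟩, hqt⟩ := hQ
  have hpne : p ≠ [] := by rintro rfl; simp at hph
  obtain ⟨t, rfl⟩ : ∃ t, q = u :: t := by
    cases q with
    | nil => simp at hqh
    | cons a t => simp at hqh; exact ⟨t, by rw [hqh]⟩
  simp only [List.tail_cons] at hqt ⊢
  have htne : t ≠ [] := by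
    rintro rfl
    exact (hql u (by simp)) hu
  refine ⟨⟨?_, ?_, ?_⟩, preLast_append hpl hqt, ?_, wt_append hpl⟩
  · rw [List.head?_append_of_ne_nil _ hpne]
    exact hph
  · intro x hx
    rw [List.dropLast_append_of_ne_nil htne] at hx
    rcases List.mem_append.mp hx with h | h
    · exact hpD x h
    · apply hqD
      have : (u :: t).dropLast = u :: t.dropLast := by
        cases t with
        | nil => exact absurd rfl htne
        | cons b s => rfl
      rw [this]
      exact List.mem_cons_of_mem _ h
  · intro z hz
    rw [List.getLast?_append_of_ne_nil _ htne] at hz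
    apply hql
    have : (u :: t).getLast? = t.getLast? := by
      have := List.getLast?_append_of_ne_nil [u] htne
      simpa using this
    rw [this]
    exact hz
  · rw [sufLast, afterLast_append hpl hqt]

/-- Splitting: a stopped walk splits at the last visit to `u`. -/
lemma split (hu : u ∈ D) {w : List V2} (hw : IsStoppedWalk D u w) :
    Pp D u (preLast u w) ∧ Qp D u (sufLast u w) ∧
      preLast u w ++ (sufLast u w).tail = w ∧
      wt w = wt (preLast u w) * wt (sufLast u w) := by
  obtain ⟨hh, hD, hl⟩ := hw
  have hwne : w ≠ [] := by rintro rfl; simp at hh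
  have humem : u ∈ w := by
    cases w with
    | nil => simp at hh
    | cons a t => simp at hh; simp [hh]
  have hdec := preLast_append_afterLast u w
  have hplast := getLast?_preLast humem
  have haLne : afterLast u w ≠ [] := by
    intro h0
    rw [h0, List.append_nil] at hdec
    rw [hdec] at hplast
    exact hl u hplast hu
  have hpre_ne : preLast u w ≠ [] := by
    intro h0; rw [h0] at hplast; simp at hplast
  have hwl : w.getLast? = (afterLast u w).getLast? := by
    conv_lhs => rw [← hdec]
    exact List.getLast?_append_of_ne_nil _ haLne
  have hdrop : w.dropLast = preLast u w ++ (afterLast u w).dropLast := by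
    conv_lhs => rw [← hdec]
    exact List.dropLast_append_of_ne_nil haLne
  have hsufdrop : (sufLast u w).dropLast = u :: (afterLast u w).dropLast := by
    rw [sufLast]
    cases h : afterLast u w with
    | nil => exact absurd h haLne
    | cons b s => rfl
  have hsuflast : (sufLast u w).getLast? = (afterLast u w).getLast? := by
    rw [sufLast]
    have := List.getLast?_append_of_ne_nil [u] haLne
    simpa using this
  refine ⟨⟨?_, hplast, ?_⟩, ⟨⟨by simp [sufLast], ?_, ?_⟩, ?_⟩, ?_, ?_⟩
  · conv_rhs => rw [← hh]
    conv_rhs => rw [← hdec]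
    exact (List.head?_append_of_ne_nil _ hpre_ne).symm
  · intro x hx
    apply hD
    rw [hdrop]
    exact List.mem_append.mpr (Or.inl hx)
  · intro x hx
    rw [hsufdrop] at hx
    rcases List.mem_cons.mp hx with rfl | h
    · exact hu
    · exact hD x (by rw [hdrop]; exact List.mem_append.mpr (Or.inr h))
  · intro z hz
    rw [hsuflast] at hz
    exact hl z (by rw [hwl]; exact hz)
  · intro x hx heq
    exact not_mem_afterLast u w (heq ▸ hx)
  · rw [sufLast, List.tail_cons]; exact hdec
  · conv_lhs => rw [← hdec]
    rw [wt_append hplast]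
    rfl

/-- Master factorization lemma. -/
lemma master (hu : u ∈ D) (A B : List V2 → Prop) :
    (∑' w : List V2,
        if IsStoppedWalk D u w ∧ A (preLast u w) ∧ B (sufLast u w) then wt w else 0)
    = (∑' p : List V2, if Pp D u p ∧ A p then wt p else 0) *
      (∑' q : List V2, if Qp D u q ∧ B q then wt q else 0) := by
  set f : List V2 → ℝ≥0∞ := fun w =>
    if IsStoppedWalk D u w ∧ A (preLast u w) ∧ B (sufLast u w) then wt w else 0 with hf
  set g : List V2 × List V2 → ℝ≥0∞ := fun x =>
    (if Pp D u x.1 ∧ A x.1 then wt x.1 else 0) *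
      (if Qp D u x.2 ∧ B x.2 then wt x.2 else 0) with hg
  have key : ∀ x : List V2 × List V2, g x ≠ 0 →
      (Pp D u x.1 ∧ A x.1) ∧ (Qp D u x.2 ∧ B x.2) ∧ wt x.1 ≠ 0 ∧ wt x.2 ≠ 0 := by
    intro x hx
    by_cases h1 : Pp D u x.1 ∧ A x.1
    · by_cases h2 : Qp D u x.2 ∧ B x.2
      · refine ⟨h1, h2, ?_, ?_⟩
        · intro h0; apply hx; simp [hg, h0]
        · intro h0; apply hx; simp [hg, h0]
      · exact absurd (by simp [hg, h2]) hx
    · exact absurd (by simp [hg, h1]) hx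
  have hmain : (∑' w : List V2, f w) = ∑' x : List V2 × List V2, g x := by
    apply tsum_eq_tsum_of_ne_zero_bij (fun x => x.1.1 ++ x.1.2.tail)
    · rintro ⟨x, hx⟩ ⟨y, hy⟩ hxy
      simp only at hxy
      obtain ⟨⟨hPx, _⟩, ⟨hQx, _⟩, -, -⟩ := key x hx
      obtain ⟨⟨hPy, _⟩, ⟨hQy, _⟩, -, -⟩ := key y hy
      obtain ⟨-, hpx, hsx, -⟩ := glue hu hPx hQx
      obtain ⟨-, hpy, hsy, -⟩ := glue hu hPy hQy
      have h1 : x.1 = y.1 := by rw [← hpx, ← hpy, hxy]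
      have h2 : x.2 = y.2 := by rw [← hsx, ← hsy, hxy]
      exact Subtype.ext (Prod.ext h1 h2)
    · intro w hw
      have hw' : (if IsStoppedWalk D u w ∧ A (preLast u w) ∧ B (sufLast u w) then wt w else 0)
          ≠ 0 := hw
      by_cases hc : IsStoppedWalk D u w ∧ A (preLast u w) ∧ B (sufLast u w)
      · obtain ⟨hS, hA, hB⟩ := hc
        have hwt : wt w ≠ 0 := by
          intro h0; apply hw'; simp [h0]
        obtain ⟨hP, hQ, hdec, hmul⟩ := split hu hS
        have hg0 : g (preLast u w, sufLast u w) ≠ 0 := by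
          rw [hg]
          simp only
          rw [if_pos ⟨hP, hA⟩, if_pos ⟨hQ, hB⟩, ← hmul]
          exact hwt
        exact ⟨⟨(preLast u w, sufLast u w), hg0⟩, hdec⟩
      · exact absurd (if_neg hc) hw'
    · rintro ⟨x, hx⟩
      obtain ⟨⟨hPx, hAx⟩, ⟨hQx, hBx⟩, -, -⟩ := key x hx
      obtain ⟨hS, hp, hs, hw⟩ := glue hu hPx hQx
      simp only [hf, hg]
      rw [if_pos ⟨hS, by rw [hp]; exact hAx, by rw [hs]; exact hBx⟩, hw,
        if_pos ⟨hPx, hAx⟩, if_pos ⟨hQx, hBx⟩]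
  rw [hmain]
  simp only [hg]
  rw [ENNReal.tsum_prod (f := fun a b =>
    (if Pp D u a ∧ A a then wt a else 0) * if Qp D u b ∧ B b then wt b else 0),
    ← ENNReal.tsum_mul_right]
  exact tsum_congr fun a => ENNReal.tsum_mul_left

end

/-- **Independence after the last visit.** Let `X` be simple random walk on `ℤ²` started at
`u₁ ∈ D`, stopped on first exiting the finite domain `D`, and let `k` be the last time with
`X(k) = u₁`.  Then the path `(X(k+j))_{j ≥ 0}` after the last visit to `u₁` is independent of
the initial segment `X[0,k]`: the joint law factorizes. -/
theorem independence_after_last_visit (D : Finset V2) (u₁ : V2) (hu : u₁ ∈ D)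
    (p q : List V2) :
    (∑' w : List V2,
        if IsStoppedWalk D u₁ w ∧ preLast u₁ w = p ∧ sufLast u₁ w = q then wt w else 0)
        * (∑' w : List V2, if IsStoppedWalk D u₁ w then wt w else 0)
      = (∑' w : List V2, if IsStoppedWalk D u₁ w ∧ preLast u₁ w = p then wt w else 0)
        * (∑' w : List V2, if IsStoppedWalk D u₁ w ∧ sufLast u₁ w = q then wt w else 0) := by
  have h1 : (∑' w : List V2,
        if IsStoppedWalk D u₁ w ∧ preLast u₁ w = p ∧ sufLast u₁ w = q then wt w else 0)
      = (∑' p' : List V2, if Pp D u₁ p' ∧ p' = p then wt p' else 0) *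
        (∑' q' : List V2, if Qp D u₁ q' ∧ q' = q then wt q' else 0) := by
    refine (tsum_congr fun w => ?_).trans
      ((master hu (fun p' => p' = p) (fun q' => q' = q)).trans ?_)
    · simp
    · congr 1 <;> exact tsum_congr fun x => by simp
  have h2 : (∑' w : List V2, if IsStoppedWalk D u₁ w then wt w else 0)
      = (∑' p' : List V2, if Pp D u₁ p' then wt p' else 0) *
        (∑' q' : List V2, if Qp D u₁ q' then wt q' else 0) := by
    refine (tsum_congr fun w => ?_).trans
      ((master hu (D := D) (u := u₁) (fun _ => True) (fun _ => True)).trans ?_)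
    · simp
    · congr 1 <;> exact tsum_congr fun x => by simp
  have h3 : (∑' w : List V2, if IsStoppedWalk D u₁ w ∧ preLast u₁ w = p then wt w else 0)
      = (∑' p' : List V2, if Pp D u₁ p' ∧ p' = p then wt p' else 0) *
        (∑' q' : List V2, if Qp D u₁ q' then wt q' else 0) := by
    refine (tsum_congr fun w => ?_).trans
      ((master hu (D := D) (u := u₁) (fun p' => p' = p) (fun _ => True)).trans ?_)
    · simp
    · congr 1 <;> exact tsum_congr fun x => by simp
  have h4 : (∑' w : List V2, if IsStoppedWalk D u₁ w ∧ sufLast u₁ w = q then wt w else 0)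
      = (∑' p' : List V2, if Pp D u₁ p' then wt p' else 0) *
        (∑' q' : List V2, if Qp D u₁ q' ∧ q' = q then wt q' else 0) := by
    refine (tsum_congr fun w => ?_).trans
      ((master hu (D := D) (u := u₁) (fun _ => True) (fun q' => q' = q)).trans ?_)
    · simp
    · congr 1 <;> exact tsum_congr fun x => by simp
  rw [h1, h2, h3, h4]
  ring
end

section
/- Suppose W^n, W are continuous functions from [0,∞) to ∂𝔻 with W^n → W locally uniformly. Let g^n_t, g_t be the corresponding solutions to the radial Loewner equation and f^n_t = (g^n_t)^{-1}, f_t = g_t^{-1}. Then f^n_t → f_t locally uniformly on [0,∞) × 𝔻. -/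
open Set Filter Metric
open scoped Topology NNReal

/-- The point `z` survives the radial Loewner flow with driving function `W` up to time
`t`. -/
def RadialSurvives (W : ℝ → ℂ) (z : ℂ) (t : ℝ) : Prop :=
  ∃ g : ℝ → ℂ, g 0 = z ∧
    ∀ s ∈ Icc (0 : ℝ) t, g s ≠ W s ∧
      HasDerivAt g (-(g s) * ((g s + W s) / (g s - W s))) s

/-- The radial Loewner hull at time `t`. -/
def radialHull (W : ℝ → ℂ) (t : ℝ) : Set ℂ :=
  {z : ℂ | ‖z‖ ≤ 1 ∧ ¬ RadialSurvives W z t}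

/-- `g` is the radial Loewner flow associated with the driving function `W`: for every
point `z` of the closed disk not yet swallowed at time `t`, the curve `s ↦ g s z` solves
the radial Loewner ODE on `[0,t]` with initial value `z`. -/
def IsRadialLoewnerFlow (W : ℝ → ℂ) (g : ℝ → ℂ → ℂ) : Prop :=
  ∀ z : ℂ, ‖z‖ ≤ 1 → ∀ t : ℝ, 0 ≤ t → z ∉ radialHull W t →
    g 0 z = z ∧
      ∀ s ∈ Icc (0 : ℝ) t, g s z ≠ W s ∧
        HasDerivAt (fun s' => g s' z) (-(g s z) * ((g s z + W s) / (g s z - W s))) s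

/-- `f` is the inverse of the radial Loewner flow `g`: for each `t ≥ 0`,
`f t : 𝔻 → 𝔻 \ K_t` is a right inverse of `g t`. -/
def IsLoewnerInverse (W : ℝ → ℂ) (g : ℝ → ℂ → ℂ) (f : ℝ → ℂ → ℂ) : Prop :=
  ∀ t : ℝ, 0 ≤ t → ∀ w : ℂ, ‖w‖ < 1 →
    ‖f t w‖ ≤ 1 ∧ f t w ∉ radialHull W t ∧ g t (f t w) = w

open Complex

lemma lower_bd {r : ℝ} (hr : r < 1) {a x : ℂ} (ha : ‖a‖ = 1)
    (hx : ‖x‖ ≤ r) : 1 - r ≤ ‖x - a‖ ∧ x - a ≠ 0 := by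
  have h1 : ‖a‖ - ‖x‖ ≤ ‖a - x‖ := norm_sub_norm_le a x
  rw [norm_sub_rev a x] at h1
  constructor
  · linarith [h1, ha]
  · intro h
    rw [h] at h1
    simp only [norm_zero] at h1
    rw [ha] at h1
    linarith

lemma field_lip (r : ℝ) (hr : r < 1) (a : ℂ) (ha : ‖a‖ = 1) :
    LipschitzOnWith (Real.toNNReal (4/(1-r)^2)) (fun h => h * ((h + a)/(h - a)))
      (Metric.closedBall (0:ℂ) r) := by
  have h1r : 0 < 1 - r := by linarith
  apply LipschitzOnWith.of_dist_le_mul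
  intro x hx y hy
  rw [Metric.mem_closedBall, dist_zero_right] at hx hy
  have hr0 : (0:ℝ) ≤ r := le_trans (norm_nonneg x) hx
  obtain ⟨hxa', hxa⟩ := lower_bd hr ha hx
  obtain ⟨hya', hya⟩ := lower_bd hr ha hy
  have key : x*((x+a)/(x-a)) - y*((y+a)/(y-a))
      = (x-y)*(x*y - a*(x+y) - a^2)/((x-a)*(y-a)) := by
    field_simp
    ring
  have hnum : ‖x*y - a*(x+y) - a^2‖ ≤ 4 := by
    have h1 : ‖x*y - a*(x+y) - a^2‖
        ≤ ‖x*y - a*(x+y)‖ + ‖a^2‖ := by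
      rw [sub_eq_add_neg _ (a^2)]
      refine (norm_add_le _ _).trans ?_
      rw [norm_neg]
    have h2 : ‖x*y - a*(x+y)‖ ≤ ‖x*y‖ + ‖a*(x+y)‖ := by
      rw [sub_eq_add_neg _ (a*(x+y))]
      refine (norm_add_le _ _).trans ?_
      rw [norm_neg]
    have h3 : ‖x+y‖ ≤ ‖x‖ + ‖y‖ := norm_add_le x y
    have h4 : ‖x*y‖ = ‖x‖ * ‖y‖ := norm_mul _ _
    have h5 : ‖a*(x+y)‖ = ‖x+y‖ := by rw [norm_mul, ha, one_mul]
    have h6 : ‖a^2‖ = 1 := by rw [norm_pow, ha]; norm_num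
    nlinarith [norm_nonneg x, norm_nonneg y]
  have hKcoe : ((Real.toNNReal (4/(1-r)^2) : ℝ≥0) : ℝ) = 4/(1-r)^2 :=
    Real.coe_toNNReal _ (by positivity)
  rw [Complex.dist_eq, Complex.dist_eq, key, hKcoe, norm_div, norm_mul, norm_mul]
  calc ‖x-y‖ * ‖x*y - a*(x+y) - a^2‖
        / (‖x-a‖ * ‖y-a‖)
      ≤ ‖x-y‖ * 4 / ((1-r)*(1-r)) := by
        have hpos := mul_pos h1r h1r
        gcongr
    _ = 4/(1-r)^2 * ‖x-y‖ := by rw [pow_two]; ring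

lemma field_pert (r : ℝ) (hr : r < 1) (a b x : ℂ) (ha : ‖a‖ = 1)
    (hb : ‖b‖ = 1) (hx : ‖x‖ ≤ r) :
    ‖x*((x+a)/(x-a)) - x*((x+b)/(x-b))‖ ≤ 2/(1-r)^2 * ‖a - b‖ := by
  have h1r : 0 < 1 - r := by linarith
  have hr0 : (0:ℝ) ≤ r := le_trans (norm_nonneg x) hx
  obtain ⟨hxa', hxa⟩ := lower_bd hr ha hx
  obtain ⟨hxb', hxb⟩ := lower_bd hr hb hx
  have key : x*((x+a)/(x-a)) - x*((x+b)/(x-b)) = 2*x^2*(a-b)/((x-a)*(x-b)) := by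
    field_simp
    ring
  rw [key, norm_div, norm_mul, norm_mul, norm_mul]
  have habsx2 : ‖x^2‖ ≤ 1 := by
    rw [norm_pow]
    nlinarith [norm_nonneg x]
  have h2 : ‖(2:ℂ)‖ = 2 := by
    simp
  calc ‖(2:ℂ)‖ * ‖x^2‖ * ‖a-b‖
        / (‖x-a‖ * ‖x-b‖)
      ≤ 2 * 1 * ‖a-b‖ / ((1-r)*(1-r)) := by
        rw [h2]
        have hpos := mul_pos h1r h1r
        gcongr
    _ = 2/(1-r)^2 * ‖a-b‖ := by rw [pow_two]; ring

lemma key_deriv_identity (x a : ℂ) (hxa : x ≠ a) :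
    2*(x.re * (-x * ((x+a)/(x-a))).re + x.im * (-x * ((x+a)/(x-a))).im)
      = -(2 * normSq x / normSq (x - a)) * (normSq x - normSq a) := by
  have h : x - a ≠ 0 := sub_ne_zero.mpr hxa
  have hN : normSq (x - a) ≠ 0 := by simpa [Complex.normSq_eq_zero] using h
  have hN' : (x.re - a.re)^2 + (x.im - a.im)^2 ≠ 0 := by
    simpa [Complex.normSq_apply, sub_re, sub_im, sq] using hN
  simp only [Complex.normSq_apply, Complex.mul_re, Complex.mul_im, Complex.div_re,
    Complex.div_im, Complex.add_re, Complex.add_im, Complex.sub_re, Complex.sub_im,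
    Complex.neg_re, Complex.neg_im]
  field_simp
  ring

lemma flow_normSq_le {W : ℝ → ℂ} (hWCont : Continuous W) (hWc : ∀ s, ‖W s‖ = 1)
    {φ : ℝ → ℂ} {t : ℝ} (ht : 0 ≤ t)
    (hode : ∀ s ∈ Icc (0:ℝ) t, φ s ≠ W s ∧
      HasDerivAt φ (-(φ s) * ((φ s + W s)/(φ s - W s))) s)
    (hle : Complex.normSq (φ t) ≤ 1) :
    ∀ s ∈ Icc (0:ℝ) t, Complex.normSq (φ s) ≤ Complex.normSq (φ t) := by
  -- clamp
  set τ : ℝ → ℝ := fun s => min (max s 0) t with hτdef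
  have hτcont : Continuous τ := (continuous_id.max continuous_const).min continuous_const
  have hτmem : ∀ s, τ s ∈ Icc (0:ℝ) t := fun s =>
    ⟨le_min (le_max_right s 0) ht, min_le_right _ _⟩
  have hτeq : ∀ s ∈ Icc (0:ℝ) t, τ s = s := by
    intro s hs
    simp only [hτdef]
    rw [max_eq_left hs.1, min_eq_left hs.2]
  have hφCont : ∀ s ∈ Icc (0:ℝ) t, ContinuousAt φ s := fun s hs =>
    ((hode s hs).2).continuousAt
  set ψ : ℝ → ℂ := fun s => φ (τ s) with hψdef
  have hψcont : Continuous ψ := by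
    rw [continuous_iff_continuousAt]
    intro s
    exact (hφCont (τ s) (hτmem s)).comp hτcont.continuousAt
  set c : ℝ → ℝ := fun s => 2 * normSq (ψ s) / normSq (ψ s - W (τ s)) with hcdef
  have hccont : Continuous c := by
    apply Continuous.div
    · exact continuous_const.mul (Complex.continuous_normSq.comp hψcont)
    · exact Complex.continuous_normSq.comp (hψcont.sub (hWCont.comp hτcont))
    · intro s
      exact fun h => (hode (τ s) (hτmem s)).1 (sub_eq_zero.mp (Complex.normSq_eq_zero.mp h))
  have hcnonneg : ∀ s, 0 ≤ c s := fun s =>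
    div_nonneg (mul_nonneg (by norm_num) (Complex.normSq_nonneg _)) (Complex.normSq_nonneg _)
  set A : ℝ → ℝ := fun s => ∫ u in (0:ℝ)..s, c u with hAdef
  have hA : ∀ s, HasDerivAt A (c s) s := fun s =>
    intervalIntegral.integral_hasDerivAt_right (hccont.intervalIntegrable 0 s)
      hccont.stronglyMeasurable.stronglyMeasurableAtFilter
      hccont.continuousAt
  have hAcont : Continuous A :=
    continuous_iff_continuousAt.mpr fun s => (hA s).continuousAt
  set u : ℝ → ℝ := fun s => normSq (φ s) - 1 with hudef
  have hu : ∀ s ∈ Icc (0:ℝ) t, HasDerivAt u (-(c s) * u s) s := by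
    intro s hs
    obtain ⟨hne, hd⟩ := hode s hs
    set d : ℂ := -(φ s) * ((φ s + W s)/(φ s - W s)) with hddef
    have hre : HasDerivAt (fun s' => (φ s').re) d.re s := by
      exact (Complex.reCLM.hasFDerivAt.comp_hasDerivAt s hd)
    have him : HasDerivAt (fun s' => (φ s').im) d.im s := by
      exact (Complex.imCLM.hasFDerivAt.comp_hasDerivAt s hd)
    have h1 : HasDerivAt u
        (d.re*(φ s).re + (φ s).re*d.re + (d.im*(φ s).im + (φ s).im*d.im)) s := by
      have := ((hre.mul hre).add (him.mul him)).sub_const 1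
      apply this.congr_of_eventuallyEq
      filter_upwards with s'
      simp [hudef, Complex.normSq_apply]
    have h2 : d.re*(φ s).re + (φ s).re*d.re + (d.im*(φ s).im + (φ s).im*d.im)
        = -(c s) * u s := by
      have hkey := key_deriv_identity (φ s) (W s) hne
      have hWs : normSq (W s) = 1 := by
        rw [← Complex.sq_norm, hWc s]; norm_num
      rw [hWs] at hkey
      have hτs := hτeq s hs
      have hcs : c s = 2 * normSq (φ s) / normSq (φ s - W s) := by
        simp only [hcdef, hψdef, hτs]
      rw [hcs, hudef]
      rw [← hddef] at hkey
      nlinarith [hkey]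
    rw [← h2]
    exact h1
  set G : ℝ → ℝ := fun s => u s * Real.exp (A s) with hGdef
  have hG : ∀ s ∈ Icc (0:ℝ) t, HasDerivAt G 0 s := by
    intro s hs
    have h1 : HasDerivAt G ((-(c s) * u s) * Real.exp (A s)
        + u s * (Real.exp (A s) * c s)) s := (hu s hs).mul ((hA s).exp)
    have h2 : (-(c s) * u s) * Real.exp (A s) + u s * (Real.exp (A s) * c s) = 0 := by ring
    rwa [h2] at h1
  have hGcont : ContinuousOn G (Icc 0 t) := by
    intro s hs
    have : ContinuousAt G s :=
      (((Complex.continuous_normSq.continuousAt).comp (hφCont s hs)).sub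
        continuousAt_const).mul ((Real.continuous_exp.comp hAcont).continuousAt)
    exact this.continuousWithinAt
  have hconst : ∀ s ∈ Icc (0:ℝ) t, G s = G 0 :=
    constant_of_has_deriv_right_zero hGcont
      (fun s hs => ((hG s (Ico_subset_Icc_self hs)).hasDerivWithinAt))
  intro s hs
  have hGs : G s = G t := by
    rw [hconst s hs, hconst t ⟨ht, le_refl t⟩]
  -- A is monotone: A s ≤ A t
  have hAst : A s ≤ A t := by
    have hint1 : IntervalIntegrable c MeasureTheory.volume 0 s := hccont.intervalIntegrable 0 s
    have hint2 : IntervalIntegrable c MeasureTheory.volume s t := hccont.intervalIntegrable s t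
    have hadd : A s + ∫ u in s..t, c u = A t :=
      intervalIntegral.integral_add_adjacent_intervals hint1 hint2
    have hpos : 0 ≤ ∫ u in s..t, c u :=
      intervalIntegral.integral_nonneg hs.2 (fun x _ => hcnonneg x)
    linarith
  have hut : u t ≤ 0 := by simp only [hudef]; linarith
  have hexp : Real.exp (A s) ≤ Real.exp (A t) := Real.exp_le_exp.mpr hAst
  have hGseq : u s * Real.exp (A s) = u t * Real.exp (A t) := hGs
  have hus : u s ≤ u t := by
    nlinarith [Real.exp_pos (A s), Real.exp_pos (A t), mul_le_mul_of_nonpos_left hexp hut]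
  simp only [hudef] at hus
  linarith

/-- One-sided trajectory data for the inverse point. -/
lemma main_est
    {W1 W2 : ℝ → ℂ} (hW1Cont : Continuous W1) (hW2Cont : Continuous W2)
    (h1circ : ∀ s, ‖W1 s‖ = 1) (h2circ : ∀ s, ‖W2 s‖ = 1)
    {g1 g2 f1 f2 : ℝ → ℂ → ℂ}
    (hg1 : IsRadialLoewnerFlow W1 g1) (hg2 : IsRadialLoewnerFlow W2 g2)
    (hf1 : IsLoewnerInverse W1 g1 f1) (hf2 : IsLoewnerInverse W2 g2 f2)
    (r : ℝ) (hr : r < 1) (t : ℝ) (ht : 0 ≤ t) (w : ℂ)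
    (hwr : ‖w‖ ≤ r) (hw1 : ‖w‖ < 1)
    (η : ℝ) (hη : ∀ s ∈ Icc (0:ℝ) t, dist (W1 s) (W2 s) ≤ η) :
    dist (f1 t w) (f2 t w)
      ≤ gronwallBound 0 (Real.toNNReal (4/(1-r)^2)) (0 + 2/(1-r)^2 * η) (t - 0) := by
  obtain ⟨hz1le, hz1hull, hz1g⟩ := hf1 t ht w hw1
  obtain ⟨hz2le, hz2hull, hz2g⟩ := hf2 t ht w hw1
  obtain ⟨hg10, hg1ode⟩ := hg1 (f1 t w) hz1le t ht hz1hull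
  obtain ⟨hg20, hg2ode⟩ := hg2 (f2 t w) hz2le t ht hz2hull
  set φ1 : ℝ → ℂ := fun s => g1 s (f1 t w) with hφ1def
  set φ2 : ℝ → ℂ := fun s => g2 s (f2 t w) with hφ2def
  -- norm bounds on trajectories
  have hb1 : ∀ s ∈ Icc (0:ℝ) t, ‖φ1 s‖ ≤ r := by
    intro s hs
    have h := flow_normSq_le hW1Cont h1circ ht hg1ode (by
      show normSq (g1 t (f1 t w)) ≤ 1
      rw [hz1g, ← Complex.sq_norm]; nlinarith [norm_nonneg w]) s hs
    replace h : normSq (g1 s (f1 t w)) ≤ normSq w :=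
      le_trans h (le_of_eq (by rw [hz1g]))
    have : ‖φ1 s‖ ≤ ‖w‖ := by
      rw [Complex.norm_def, Complex.norm_def]
      exact Real.sqrt_le_sqrt h
    linarith
  have hb2 : ∀ s ∈ Icc (0:ℝ) t, ‖φ2 s‖ ≤ r := by
    intro s hs
    have h := flow_normSq_le hW2Cont h2circ ht hg2ode (by
      show normSq (g2 t (f2 t w)) ≤ 1
      rw [hz2g, ← Complex.sq_norm]; nlinarith [norm_nonneg w]) s hs
    replace h : normSq (g2 s (f2 t w)) ≤ normSq w :=
      le_trans h (le_of_eq (by rw [hz2g]))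
    have : ‖φ2 s‖ ≤ ‖w‖ := by
      rw [Complex.norm_def, Complex.norm_def]
      exact Real.sqrt_le_sqrt h
    linarith
  -- reversed trajectories
  set ψ1 : ℝ → ℂ := fun s => φ1 (t - s) with hψ1def
  set ψ2 : ℝ → ℂ := fun s => φ2 (t - s) with hψ2def
  have hmem : ∀ s ∈ Icc (0:ℝ) t, t - s ∈ Icc (0:ℝ) t := by
    intro s hs
    exact ⟨by linarith [hs.2], by linarith [hs.1]⟩
  have hψ1cont : ContinuousOn ψ1 (Icc 0 t) := by
    intro s hs
    exact (((hg1ode (t-s) (hmem s hs)).2.continuousAt).comp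
      ((continuous_const.sub continuous_id).continuousAt)).continuousWithinAt
  have hψ2cont : ContinuousOn ψ2 (Icc 0 t) := by
    intro s hs
    exact (((hg2ode (t-s) (hmem s hs)).2.continuousAt).comp
      ((continuous_const.sub continuous_id).continuousAt)).continuousWithinAt
  set v : ℝ → ℂ → ℂ := fun s h => h * ((h + W1 (t-s))/(h - W1 (t-s))) with hvdef
  have hv : ∀ s, LipschitzOnWith (Real.toNNReal (4/(1-r)^2)) (v s)
      (Metric.closedBall (0:ℂ) r) := fun s => field_lip r hr _ (h1circ _)
  have hψ1' : ∀ s ∈ Ico (0:ℝ) t,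
      HasDerivWithinAt ψ1 (ψ1 s * ((ψ1 s + W1 (t-s))/(ψ1 s - W1 (t-s)))) (Ici s) s := by
    intro s hs
    have hd := (hg1ode (t-s) (hmem s (Ico_subset_Icc_self hs))).2
    have hts : HasDerivAt (fun u : ℝ => t - u) (-1) s := by
      simpa using (hasDerivAt_id s).const_sub t
    have hcomp : HasDerivAt (fun u : ℝ => φ1 (t - u))
        ((-1:ℝ) • (-(g1 (t-s) (f1 t w)) * ((g1 (t-s) (f1 t w) + W1 (t-s))
          / (g1 (t-s) (f1 t w) - W1 (t-s))))) s := HasDerivAt.scomp_of_eq (hg := hd) (hh := hts) (hy := rfl)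
    have heq : (-1:ℝ) • (-(g1 (t-s) (f1 t w)) * ((g1 (t-s) (f1 t w) + W1 (t-s))
          / (g1 (t-s) (f1 t w) - W1 (t-s))))
        = (g1 (t-s) (f1 t w)) * ((g1 (t-s) (f1 t w) + W1 (t-s))
          / (g1 (t-s) (f1 t w) - W1 (t-s))) := by
      rw [neg_smul, one_smul]; ring
    rw [heq] at hcomp
    exact hcomp.hasDerivWithinAt
  have hψ2' : ∀ s ∈ Ico (0:ℝ) t,
      HasDerivWithinAt ψ2 (ψ2 s * ((ψ2 s + W2 (t-s))/(ψ2 s - W2 (t-s)))) (Ici s) s := by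
    intro s hs
    have hd := (hg2ode (t-s) (hmem s (Ico_subset_Icc_self hs))).2
    have hts : HasDerivAt (fun u : ℝ => t - u) (-1) s := by
      simpa using (hasDerivAt_id s).const_sub t
    have hcomp : HasDerivAt (fun u : ℝ => φ2 (t - u))
        ((-1:ℝ) • (-(g2 (t-s) (f2 t w)) * ((g2 (t-s) (f2 t w) + W2 (t-s))
          / (g2 (t-s) (f2 t w) - W2 (t-s))))) s := HasDerivAt.scomp_of_eq (hg := hd) (hh := hts) (hy := rfl)
    have heq : (-1:ℝ) • (-(g2 (t-s) (f2 t w)) * ((g2 (t-s) (f2 t w) + W2 (t-s))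
          / (g2 (t-s) (f2 t w) - W2 (t-s))))
        = (g2 (t-s) (f2 t w)) * ((g2 (t-s) (f2 t w) + W2 (t-s))
          / (g2 (t-s) (f2 t w) - W2 (t-s))) := by
      rw [neg_smul, one_smul]; ring
    rw [heq] at hcomp
    exact hcomp.hasDerivWithinAt
  have hfs : ∀ s ∈ Ico (0:ℝ) t, ψ1 s ∈ Metric.closedBall (0:ℂ) r := by
    intro s hs
    rw [Metric.mem_closedBall, dist_zero_right]
    exact hb1 _ (hmem s (Ico_subset_Icc_self hs))
  have hgs : ∀ s ∈ Ico (0:ℝ) t, ψ2 s ∈ Metric.closedBall (0:ℂ) r := by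
    intro s hs
    rw [Metric.mem_closedBall, dist_zero_right]
    exact hb2 _ (hmem s (Ico_subset_Icc_self hs))
  have f_bound : ∀ s ∈ Ico (0:ℝ) t,
      dist (ψ1 s * ((ψ1 s + W1 (t-s))/(ψ1 s - W1 (t-s)))) (v s (ψ1 s)) ≤ 0 := by
    intro s hs
    simp [hvdef]
  have g_bound : ∀ s ∈ Ico (0:ℝ) t,
      dist (ψ2 s * ((ψ2 s + W2 (t-s))/(ψ2 s - W2 (t-s)))) (v s (ψ2 s)) ≤ 2/(1-r)^2 * η := by
    intro s hs
    have hx : ‖ψ2 s‖ ≤ r := hb2 _ (hmem s (Ico_subset_Icc_self hs))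
    have := field_pert r hr (W2 (t-s)) (W1 (t-s)) (ψ2 s) (h2circ _) (h1circ _) hx
    rw [Complex.dist_eq, hvdef]
    refine le_trans (by simpa using this) ?_
    have h1r : (0:ℝ) < 1 - r := by linarith
    have : ‖W2 (t-s) - W1 (t-s)‖ = dist (W1 (t-s)) (W2 (t-s)) := by
      rw [Complex.dist_eq, norm_sub_rev]
    rw [this]
    have := hη (t-s) (hmem s (Ico_subset_Icc_self hs))
    gcongr
  have ha0 : dist (ψ1 0) (ψ2 0) ≤ 0 := by
    have e1 : ψ1 0 = w := by simp only [hψ1def, sub_zero]; exact hz1g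
    have e2 : ψ2 0 = w := by simp only [hψ2def, sub_zero]; exact hz2g
    rw [e1, e2, dist_self]
  have hfinal := dist_le_of_approx_trajectories_ODE_of_mem (fun s _ => hv s) hψ1cont hψ1' f_bound hfs
    hψ2cont hψ2' g_bound hgs ha0 t ⟨ht, le_refl t⟩
  have e1 : ψ1 t = f1 t w := by simp only [hψ1def, sub_self]; exact hg10
  have e2 : ψ2 t = f2 t w := by simp only [hψ2def, sub_self]; exact hg20
  rwa [e1, e2] at hfinal

/-- **Continuity of the Loewner flow in the driving function.**  If the continuous
circle-valued driving functions `Wⁿ` converge locally uniformly to `W`, then the inverse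
maps `fⁿ_t = (gⁿ_t)⁻¹` converge to `f_t = g_t⁻¹` locally uniformly on
`[0,∞) × 𝔻`. -/
theorem loewner_inverse_continuity
    (Wn : ℕ → ℝ → ℂ) (W : ℝ → ℂ)
    (hWnCont : ∀ n, Continuous (Wn n)) (hWCont : Continuous W)
    (hWnCirc : ∀ n s, ‖Wn n s‖ = 1) (hWCirc : ∀ s, ‖W s‖ = 1)
    (hconv : TendstoLocallyUniformlyOn (fun n => Wn n) W atTop (Ici (0 : ℝ)))
    (gn : ℕ → ℝ → ℂ → ℂ) (g : ℝ → ℂ → ℂ) (fn : ℕ → ℝ → ℂ → ℂ) (f : ℝ → ℂ → ℂ)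
    (hgn : ∀ n, IsRadialLoewnerFlow (Wn n) (gn n))
    (hg : IsRadialLoewnerFlow W g)
    (hfn : ∀ n, IsLoewnerInverse (Wn n) (gn n) (fn n))
    (hf : IsLoewnerInverse W g f) :
    TendstoLocallyUniformlyOn (fun n (p : ℝ × ℂ) => fn n p.1 p.2)
      (fun p => f p.1 p.2) atTop (Ici (0 : ℝ) ×ˢ Metric.ball (0 : ℂ) 1) := by
  rw [Metric.tendstoLocallyUniformlyOn_iff]
  rintro ε hε ⟨t₀, w₀⟩ hx
  rw [Set.mem_prod] at hx
  have ht₀ : (0:ℝ) ≤ t₀ := hx.1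
  have hw₀ : ‖w₀‖ < 1 := by
    simpa [Metric.mem_ball, Complex.dist_eq] using hx.2
  have habs0 : (0:ℝ) ≤ ‖w₀‖ := norm_nonneg w₀
  set r : ℝ := (1 + ‖w₀‖)/2 with hrdef
  have hr : r < 1 := by rw [hrdef]; linarith
  have hw₀r : ‖w₀‖ < r := by rw [hrdef]; linarith
  have h1r : (0:ℝ) < 1 - r := by linarith
  set T : ℝ := t₀ + 1 with hTdef
  set K : ℝ := 4/(1-r)^2 with hKdef
  have hK0 : 0 < K := by rw [hKdef]; positivity
  set C : ℝ := 2/(1-r)^2 with hCdef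
  have hC0 : 0 < C := by rw [hCdef]; positivity
  have hB0 : 0 < Real.exp (K*T) := Real.exp_pos _
  set η : ℝ := ε * K / (C * Real.exp (K*T)) with hηdef
  have hη0 : 0 < η := by rw [hηdef]; positivity
  have hTLU : TendstoUniformlyOn (fun n => Wn n) W atTop (Icc 0 T) :=
    (tendstoLocallyUniformlyOn_iff_tendstoUniformlyOn_of_compact isCompact_Icc).mp
      (hconv.mono (fun s hs => hs.1))
  have hev : ∀ᶠ n in atTop, ∀ s ∈ Icc (0:ℝ) T, dist (W s) (Wn n s) < η :=
    Metric.tendstoUniformlyOn_iff.mp hTLU η hη0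
  refine ⟨(Ici 0 ×ˢ Metric.ball (0:ℂ) 1) ∩ (Iio T ×ˢ Metric.ball (0:ℂ) r), ?_, ?_⟩
  · refine inter_mem_nhdsWithin _ ((isOpen_Iio.prod Metric.isOpen_ball).mem_nhds ?_)
    rw [Set.mem_prod]
    constructor
    · show t₀ < T
      rw [hTdef]; linarith
    · rw [Metric.mem_ball, Complex.dist_eq, sub_zero]
      exact hw₀r
  · filter_upwards [hev] with n hn
    rintro ⟨t, w⟩ ⟨⟨ht, hw1'⟩, ⟨htT, hwr'⟩⟩
    have ht : (0:ℝ) ≤ t := ht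
    have hw1 : ‖w‖ < 1 := by
      simpa [Metric.mem_ball, Complex.dist_eq] using hw1'
    have hwr : ‖w‖ ≤ r := by
      have : ‖w‖ < r := by
        simpa [Metric.mem_ball, Complex.dist_eq] using hwr'
      linarith
    have htT' : t ≤ T := le_of_lt htT
    have hηb : ∀ s ∈ Icc (0:ℝ) t, dist (W s) (Wn n s) ≤ η := fun s hs =>
      le_of_lt (hn s ⟨hs.1, le_trans hs.2 htT'⟩)
    have hmain := main_est hWCont (hWnCont n) hWCirc (hWnCirc n) hg (hgn n) hf (hfn n)
      r hr t ht w hwr hw1 η hηb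
    refine lt_of_le_of_lt hmain ?_
    have hKcoe : ((Real.toNNReal (4/(1-r)^2) : ℝ≥0) : ℝ) = K :=
      Real.coe_toNNReal _ (by rw [← hKdef]; exact le_of_lt hK0)
    have hKne : ((Real.toNNReal (4/(1-r)^2) : ℝ≥0) : ℝ) ≠ 0 := by
      rw [hKcoe]; exact ne_of_gt hK0
    rw [gronwallBound_of_K_ne_0 hKne, hKcoe]
    beta_reduce
    have hA0 : 0 < Real.exp (K*(t-0)) := Real.exp_pos _
    have hAB : Real.exp (K*(t-0)) ≤ Real.exp (K*T) := by
      apply Real.exp_le_exp.mpr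
      have : t - 0 ≤ T := by linarith
      exact mul_le_mul_of_nonneg_left this (le_of_lt hK0)
    have hsimp : 0 * Real.exp (K*(t-0)) + (0 + 2/(1-r)^2 * η)/K * (Real.exp (K*(t-0)) - 1)
        = ε * (Real.exp (K*(t-0)) - 1) / Real.exp (K*T) := by
      rw [hηdef, hCdef, hKdef]
      field_simp
      ring
    rw [hsimp, div_lt_iff₀ hB0]
    nlinarith
end

section
/- Let β_n, β : [0,1] → closure(𝔻) \ {0} be curves with β_n[0,1] converging to β[0,1] in the Hausdorff metric (in particular, if ρ(β_n, β) → 0). Then the capacity of β_n[0,1] from 0 tends to the capacity of β[0,1] from 0, where the capacity of a compact K ⊂ closure(𝔻) with 0 in the domain component is log ψ'(0) for ψ the conformal map of the component of 0 in 𝔻 \ K onto 𝔻 fixing 0 with positive derivative. -/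
open Set Filter Metric
open scoped Topology unitInterval

/-- `ψ` is the normalized conformal map of the component of `0` in `𝔻 \ K` onto `𝔻`,
with derivative `d > 0` at `0`; `log d` is the capacity of `closure 𝔻 \ D` from `0`. -/
def IsCapacityMap (K : Set ℂ) (ψ : ℂ → ℂ) (d : ℝ) : Prop :=
  0 < d ∧ ψ 0 = 0 ∧ HasDerivAt ψ (d : ℂ) 0 ∧
    DifferentiableOn ℂ ψ (connectedComponentIn (Metric.ball (0 : ℂ) 1 \ K) 0) ∧
    InjOn ψ (connectedComponentIn (Metric.ball (0 : ℂ) 1 \ K) 0) ∧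
    ψ '' connectedComponentIn (Metric.ball (0 : ℂ) 1 \ K) 0 = Metric.ball (0 : ℂ) 1

namespace CapacityAux
noncomputable section

lemma exists_inverse {K : Set ℂ} {ψ : ℂ → ℂ} {d : ℝ} (hK : IsClosed K) (h0K : (0:ℂ) ∉ K)
    (hm : IsCapacityMap K ψ d) :
    ∃ φ : ℂ → ℂ, DifferentiableOn ℂ φ (ball 0 1) ∧ φ 0 = 0 ∧ HasDerivAt φ ((d:ℂ))⁻¹ 0 ∧
      (∀ w ∈ ball (0:ℂ) 1, φ w ∈ connectedComponentIn (ball (0:ℂ) 1 \ K) 0) ∧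
      (∀ w ∈ ball (0:ℂ) 1, ψ (φ w) = w) := by
  obtain ⟨hd, hψ0, hψder, hψdiff, hψinj, hψim⟩ := hm
  set D := connectedComponentIn (Metric.ball (0:ℂ) 1 \ K) 0 with hDdef
  have h0 : (0:ℂ) ∈ ball (0:ℂ) 1 \ K := ⟨by simp, h0K⟩
  have hDopen : IsOpen D := (isOpen_ball.sdiff hK).connectedComponentIn
  have hD0 : (0:ℂ) ∈ D := mem_connectedComponentIn h0
  have hDsub : D ⊆ ball 0 1 \ K := connectedComponentIn_subset _ _
  have hDconn : IsPreconnected D := (isConnected_connectedComponentIn_iff.mpr h0).isPreconnected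
  have hψan : AnalyticOnNhd ℂ ψ D := hψdiff.analyticOnNhd hDopen
  have hdne : (d:ℂ) ≠ 0 := by exact_mod_cast ne_of_gt hd
  have hopen : ∀ s ⊆ D, IsOpen s → IsOpen (ψ '' s) := by
    rcases hψan.is_constant_or_isOpen hDconn with ⟨w, hw⟩ | h
    · exfalso
      have h1 : (0:ℂ) ∈ ψ '' D := hψim ▸ (by simp : (0:ℂ) ∈ ball (0:ℂ) 1)
      have h2 : (1/2 : ℂ) ∈ ψ '' D := hψim ▸ (by norm_num [mem_ball] : (1/2 : ℂ) ∈ ball (0:ℂ) 1)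
      obtain ⟨z1, hz1, hz1'⟩ := h1
      obtain ⟨z2, hz2, hz2'⟩ := h2
      have e1 : (0:ℂ) = w := hz1' ▸ hw z1 hz1
      have e2 : (1/2:ℂ) = w := hz2' ▸ hw z2 hz2
      rw [← e2] at e1; norm_num at e1
    · exact h
  classical
  set φ := Function.invFunOn ψ D with hφdef
  have hrin : ∀ w ∈ ball (0:ℂ) 1, φ w ∈ D ∧ ψ (φ w) = w := by
    intro w hw
    have hex : ∃ z ∈ D, ψ z = w := by
      rw [← hψim] at hw; obtain ⟨z, hz, hz'⟩ := hw; exact ⟨z, hz, hz'⟩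
    exact ⟨Function.invFunOn_mem hex, Function.invFunOn_eq hex⟩
  have hlin : ∀ z ∈ D, φ (ψ z) = z := fun z hz => hψinj.leftInvOn_invFunOn hz
  have hφ0 : φ 0 = 0 := by have := hlin 0 hD0; rwa [hψ0] at this
  have hφcont : ∀ w ∈ ball (0:ℂ) 1, ContinuousAt φ w := by
    intro w hw
    rw [ContinuousAt, Filter.tendsto_def]
    intro V hV
    obtain ⟨O, hOV, hOopen, hmemO⟩ := _root_.mem_nhds_iff.mp hV
    have hWopen : IsOpen (ψ '' (O ∩ D)) := hopen _ inter_subset_right (hOopen.inter hDopen)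
    have hwW : w ∈ ψ '' (O ∩ D) := ⟨φ w, ⟨hmemO, (hrin w hw).1⟩, (hrin w hw).2⟩
    refine mem_of_superset ((hWopen.inter isOpen_ball).mem_nhds ⟨hwW, hw⟩) ?_
    rintro y ⟨⟨z, ⟨hzO, hzD⟩, rfl⟩, hyb⟩
    show φ (ψ z) ∈ V
    rw [hlin z hzD]; exact hOV hzO
  -- countable set of critical values
  set Z : Set ℂ := {z | z ∈ D ∧ deriv ψ z = 0} with hZdef
  have hgan : AnalyticOnNhd ℂ (deriv ψ) D := hψan.deriv
  have hZiso : ∀ z ∈ Z, {z} ∈ 𝓝[Z] z := by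
    rintro z ⟨hzD, hz0⟩
    rcases (hgan z hzD).eventually_eq_zero_or_eventually_ne_zero with h | h
    · exfalso
      have heq : EqOn (deriv ψ) 0 D :=
        hgan.eqOn_zero_of_preconnected_of_eventuallyEq_zero hDconn hzD h
      have h0' := heq hD0
      rw [hψder.deriv] at h0'
      exact hdne (by simpa using h0')
    · have h' : ∀ᶠ y in 𝓝 z, y ∈ ({z}ᶜ : Set ℂ) → deriv ψ y ≠ 0 := by
        rwa [eventually_nhdsWithin_iff] at h
      rw [mem_nhdsWithin_iff_eventually]
      filter_upwards [h'] with y hy hyZ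
      by_contra hne
      exact hy (by simpa using hne) hyZ.2
  have hZc : Z.Countable := by
    obtain ⟨t, hts, htc, hcov⟩ :=
      TopologicalSpace.countable_cover_nhdsWithin (f := fun x => {x}) (s := Z) hZiso
    refine htc.mono ?_
    intro z hz
    obtain ⟨x, hx⟩ := mem_iUnion.mp (hcov hz)
    obtain ⟨hxt, hzx⟩ := mem_iUnion.mp hx
    simp only [mem_singleton_iff] at hzx
    rwa [hzx]
  have hSc : (ψ '' Z).Countable := hZc.image ψ
  have hdiffAt : ∀ w ∈ ball (0:ℂ) 1 \ (ψ '' Z), DifferentiableAt ℂ φ w := by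
    rintro w ⟨hw, hwS⟩
    have h1 := hrin w hw
    have hder : deriv ψ (φ w) ≠ 0 := by
      intro h0
      exact hwS ⟨φ w, ⟨h1.1, h0⟩, h1.2⟩
    have hψat : HasDerivAt ψ (deriv ψ (φ w)) (φ w) :=
      (hψdiff.differentiableAt (hDopen.mem_nhds h1.1)).hasDerivAt
    have hev : ∀ᶠ y in 𝓝 w, ψ (φ y) = y := by
      filter_upwards [isOpen_ball.mem_nhds hw] with y hy using (hrin y hy).2
    exact (HasDerivAt.of_local_left_inverse (hφcont w hw) hψat hder hev).differentiableAt
  have hφdiff : DifferentiableOn ℂ φ (ball 0 1) := by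
    intro w hw
    have hwlt : ‖w‖ < 1 := by simpa [mem_ball, dist_eq_norm] using hw
    have hRpos : (0:ℝ) < (1 - ‖w‖)/2 := by linarith
    set R : NNReal := ⟨(1 - ‖w‖)/2, le_of_lt hRpos⟩ with hRdef
    have hRcoe : (R : ℝ) = (1 - ‖w‖)/2 := rfl
    have hsub : closedBall w (R:ℝ) ⊆ ball 0 1 := by
      intro x hx
      rw [mem_closedBall, dist_eq_norm] at hx
      rw [mem_ball, dist_eq_norm, sub_zero]
      calc ‖x‖ = ‖x - w + w‖ := by ring_nf
        _ ≤ ‖x - w‖ + ‖w‖ := norm_add_le _ _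
        _ ≤ (1 - ‖w‖)/2 + ‖w‖ := by rw [hRcoe] at hx; linarith
        _ < 1 := by linarith
    have hcont : ContinuousOn φ (closedBall w (R:ℝ)) := fun x hx =>
      (hφcont x (hsub hx)).continuousWithinAt
    have hdiff' : ∀ z ∈ ball w (R:ℝ) \ (ψ '' Z), DifferentiableAt ℂ φ z := fun z hz =>
      hdiffAt z ⟨hsub (ball_subset_closedBall hz.1), hz.2⟩
    have hRpos' : 0 < R := hRpos
    have h := Complex.hasFPowerSeriesOnBall_of_differentiable_off_countable
      (R := R) (c := w) hSc hcont hdiff' hRpos'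
    exact h.analyticAt.differentiableAt.differentiableWithinAt
  have hφder : HasDerivAt φ ((d:ℂ))⁻¹ 0 := by
    have hψat : HasDerivAt ψ (d:ℂ) (φ 0) := by rw [hφ0]; exact hψder
    have hev : ∀ᶠ y in 𝓝 (0:ℂ), ψ (φ y) = y := by
      filter_upwards [isOpen_ball.mem_nhds (by simp : (0:ℂ) ∈ ball (0:ℂ) 1)] with y hy
        using (hrin y hy).2
    exact HasDerivAt.of_local_left_inverse (hφcont 0 (by simp)) hψat hdne hev
  exact ⟨φ, hφdiff, hφ0, hφder, fun w hw => (hrin w hw).1, fun w hw => (hrin w hw).2⟩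

lemma schwarz_step {K' : Set ℂ} {ψ' : ℂ → ℂ} {d' : ℝ} (hm : IsCapacityMap K' ψ' d')
    (f : ℂ → ℂ) (c : ℂ) (hf : DifferentiableOn ℂ f (ball 0 1)) (hc : HasDerivAt f c 0)
    (hf0 : f 0 = 0)
    (hmaps : MapsTo f (ball 0 1) (connectedComponentIn (ball (0:ℂ) 1 \ K') 0)) :
    d' * ‖c‖ ≤ 1 := by
  obtain ⟨hd, hψ0, hψder, hψdiff, hψinj, hψim⟩ := hm
  set D := connectedComponentIn (Metric.ball (0:ℂ) 1 \ K') 0 with hDdef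
  have hgdiff : DifferentiableOn ℂ (ψ' ∘ f) (ball 0 1) := hψdiff.comp hf hmaps
  have hgmaps : MapsTo (ψ' ∘ f) (ball 0 1) (ball 0 1) := by
    intro z hz
    have : ψ' (f z) ∈ ψ' '' D := ⟨f z, hmaps hz, rfl⟩
    rwa [hψim] at this
  have hg0 : (ψ' ∘ f) 0 = 0 := by simp [Function.comp, hf0, hψ0]
  have hgder : HasDerivAt (ψ' ∘ f) ((d' : ℂ) * c) 0 := by
    have : HasDerivAt ψ' (d' : ℂ) (f 0) := by rw [hf0]; exact hψder
    exact this.comp 0 hc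
  have := Complex.norm_deriv_le_one_of_mapsTo_ball hgdiff
    (hgmaps.mono_right (by rw [hg0]; exact ball_subset_closedBall)) one_pos
  rw [hgder.deriv] at this
  calc d' * ‖c‖ = ‖(d' : ℂ) * c‖ := by
        rw [norm_mul, Complex.norm_real, Real.norm_eq_abs, abs_of_pos hd]
    _ ≤ 1 := by exact this

lemma montel (F : ℕ → ℂ → ℂ) (hdiff : ∀ n, DifferentiableOn ℂ (F n) (ball 0 1))
    (hb : ∀ n, ∀ z ∈ ball (0:ℂ) 1, ‖F n z‖ ≤ 1) :
    ∃ (f : ℂ → ℂ) (t : ℕ → ℕ), StrictMono t ∧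
      TendstoLocallyUniformlyOn (fun m => F (t m)) f atTop (ball 0 1) := by
  -- power series representation at any radius R < 1
  have hser : ∀ (n : ℕ) (R : ℝ), 0 < R → R < 1 →
      HasFPowerSeriesOnBall (F n) (cauchyPowerSeries (F n) 0 R) 0 (ENNReal.ofReal R) := by
    intro n R hR0 hR1
    have hcoe : ((R.toNNReal : ℝ)) = R := Real.coe_toNNReal _ hR0.le
    have hsub : closedBall (0:ℂ) R ⊆ ball 0 1 := by
      intro x hx
      rw [mem_closedBall, dist_eq_norm, sub_zero] at hx
      rw [mem_ball, dist_eq_norm, sub_zero]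
      linarith
    have hdc : DiffContOnCl ℂ (F n) (ball (0:ℂ) R) := by
      refine ⟨(hdiff n).mono (fun x hx => ball_subset_ball hR1.le hx), ?_⟩
      refine ((hdiff n).continuousOn.mono ?_)
      exact (closure_ball (0:ℂ) hR0.ne').symm ▸ hsub
    rw [← hcoe] at hdc
    have := hdc.hasFPowerSeriesOnBall (R := R.toNNReal) (by simpa [Real.toNNReal_pos] using hR0)
    rw [hcoe] at this
    rwa [ENNReal.ofReal]
  -- coefficients (independent of the radius)
  set a : ℕ → ℕ → ℂ := fun n k => (cauchyPowerSeries (F n) 0 (1/2)).coeff k with hadef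
  have hcoeff : ∀ (n : ℕ) (R : ℝ), 0 < R → R < 1 →
      ∀ k, (cauchyPowerSeries (F n) 0 R).coeff k = a n k := by
    intro n R hR0 hR1 k
    have h1 := (hser n R hR0 hR1).hasFPowerSeriesAt
    have h2 := (hser n (1/2) (by norm_num) (by norm_num)).hasFPowerSeriesAt
    rw [h1.eq_formalMultilinearSeries h2]
  have hcirc : ∀ (R : ℝ) (θ : ℝ), 0 < R → R < 1 → circleMap 0 R θ ∈ ball (0:ℂ) 1 := by
    intro R θ hR0 hR1
    simp only [mem_ball, dist_eq_norm, sub_zero]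
    have : ‖circleMap 0 R θ‖ = |R| := by
      simpa using norm_circleMap_zero R θ
    rw [this, abs_of_pos hR0]; exact hR1
  have hbnd : ∀ (n k : ℕ) (R : ℝ), 0 < R → R < 1 → ‖a n k‖ ≤ (R⁻¹)^k := by
    intro n k R hR0 hR1
    rw [← hcoeff n R hR0 hR1 k]
    have hle : ‖(cauchyPowerSeries (F n) 0 R).coeff k‖ ≤ ‖cauchyPowerSeries (F n) 0 R k‖ := by
      simp only [FormalMultilinearSeries.coeff]
      simpa using (cauchyPowerSeries (F n) 0 R k).le_opNorm 1
    refine hle.trans ?_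
    have hmain := norm_cauchyPowerSeries_le (F n) 0 R k
    have hint : (∫ θ in (0:ℝ)..2*Real.pi, ‖F n (circleMap 0 R θ)‖) ≤ 2*Real.pi := by
      have hcont : ContinuousOn (fun θ : ℝ => ‖F n (circleMap 0 R θ)‖) (uIcc 0 (2*Real.pi)) := by
        apply ContinuousOn.norm
        exact (hdiff n).continuousOn.comp (continuous_circleMap 0 R).continuousOn
          (fun θ _ => hcirc R θ hR0 hR1)
      calc (∫ θ in (0:ℝ)..2*Real.pi, ‖F n (circleMap 0 R θ)‖)
          ≤ ∫ _ in (0:ℝ)..2*Real.pi, (1:ℝ) := by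
            apply intervalIntegral.integral_mono_on (by positivity)
              hcont.intervalIntegrable intervalIntegrable_const
            intro θ _
            exact hb n _ (hcirc R θ hR0 hR1)
        _ = 2*Real.pi := by simp
    refine hmain.trans ?_
    have hπ : (0:ℝ) < 2*Real.pi := by positivity
    calc ((2*Real.pi)⁻¹ * ∫ θ in (0:ℝ)..2*Real.pi, ‖F n (circleMap 0 R θ)‖) * |R|⁻¹ ^ k
        ≤ ((2*Real.pi)⁻¹ * (2*Real.pi)) * |R|⁻¹ ^ k := by
          gcongr
      _ = (R⁻¹)^k := by
          rw [inv_mul_cancel₀ hπ.ne', one_mul, abs_of_pos hR0]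
  have hsum : ∀ (n : ℕ) (z : ℂ), ‖z‖ < 1 → HasSum (fun k => a n k * z^k) (F n z) := by
    intro n z hz
    set R : ℝ := (‖z‖ + 1)/2 with hRdef
    have hz0 : 0 ≤ ‖z‖ := norm_nonneg z
    have hR0 : 0 < R := by rw [hRdef]; linarith
    have hzR : ‖z‖ < R := by rw [hRdef]; linarith
    have hR1 : R < 1 := by rw [hRdef]; linarith
    have hmem : z ∈ Metric.eball (0:ℂ) (ENNReal.ofReal R) := by
      rw [mem_eball_zero_iff, ← ofReal_norm]
      exact (ENNReal.ofReal_lt_ofReal_iff hR0).mpr hzR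
    have h := (hser n R hR0 hR1).hasSum hmem
    rw [zero_add] at h
    have heq : (fun k => cauchyPowerSeries (F n) 0 R k fun _ => z) = fun k => a n k * z^k := by
      funext k
      rw [FormalMultilinearSeries.apply_eq_pow_smul_coeff, hcoeff n R hR0 hR1 k, smul_eq_mul,
        mul_comm]
    rwa [heq] at h
  -- extraction of a coefficientwise convergent subsequence
  have hmem : ∀ n, a n ∈ Set.pi (univ : Set ℕ) (fun k => closedBall (0:ℂ) (2^k)) := by
    intro n k _
    rw [mem_closedBall, dist_eq_norm, sub_zero]
    have h := hbnd n k (1/2) (by norm_num) (by norm_num)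
    norm_num at h
    exact h
  have hcpt : IsCompact (Set.pi (univ : Set ℕ) (fun k => closedBall (0:ℂ) (2^k))) :=
    isCompact_univ_pi (fun k => isCompact_closedBall _ _)
  obtain ⟨A, hA, t, htmono, htend⟩ := hcpt.tendsto_subseq hmem
  have hcoord : ∀ k, Tendsto (fun m => a (t m) k) atTop (𝓝 (A k)) := fun k =>
    tendsto_pi_nhds.mp htend k
  have hAbnd : ∀ (k : ℕ) (R : ℝ), 0 < R → R < 1 → ‖A k‖ ≤ (R⁻¹)^k := by
    intro k R hR0 hR1
    exact le_of_tendsto (hcoord k).norm (Eventually.of_forall fun m => hbnd (t m) k R hR0 hR1)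
  -- limit function
  set f : ℂ → ℂ := fun z => ∑' k, A k * z^k with hfdef
  have hAsummable : ∀ z : ℂ, ‖z‖ < 1 → Summable (fun k => A k * z^k) := by
    intro z hz
    set R : ℝ := (‖z‖ + 1)/2 with hRdef
    have hz0 : 0 ≤ ‖z‖ := norm_nonneg z
    have hR0 : 0 < R := by rw [hRdef]; linarith
    have hzR : ‖z‖ < R := by rw [hRdef]; linarith
    have hR1 : R < 1 := by rw [hRdef]; linarith
    have hq1 : ‖z‖/R < 1 := (div_lt_one hR0).mpr hzR
    have hq0 : 0 ≤ ‖z‖/R := div_nonneg hz0 hR0.le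
    refine Summable.of_norm_bounded
      (summable_geometric_of_lt_one hq0 hq1) ?_
    intro k
    show ‖A k * z ^ k‖ ≤ (‖z‖/R)^k
    rw [norm_mul, norm_pow, div_pow]
    calc ‖A k‖ * ‖z‖^k ≤ (R⁻¹)^k * ‖z‖^k := by
          have := hAbnd k R hR0 hR1
          gcongr
      _ = ‖z‖^k / R^k := by rw [inv_pow]; ring
  have hfsum : ∀ z : ℂ, ‖z‖ < 1 → HasSum (fun k => A k * z^k) (f z) := fun z hz =>
    (hAsummable z hz).hasSum
  refine ⟨f, t, htmono, ?_⟩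
  rw [tendstoLocallyUniformlyOn_iff_forall_isCompact isOpen_ball]
  intro Kc hKsub hKc
  rcases Kc.eq_empty_or_nonempty with rfl | hne
  · simp [TendstoUniformlyOn]
  obtain ⟨z₀, hz₀K, hz₀max⟩ := hKc.exists_isMaxOn hne continuous_norm.continuousOn
  set r : ℝ := ‖z₀‖ with hrdef
  have hr0 : 0 ≤ r := norm_nonneg _
  have hr1 : r < 1 := by
    have := hKsub hz₀K; simpa [mem_ball, dist_eq_norm] using this
  have hKsub' : Kc ⊆ closedBall 0 r := by
    intro z hz
    rw [mem_closedBall, dist_eq_norm, sub_zero]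
    exact hz₀max hz
  refine TendstoUniformlyOn.mono ?_ hKsub'
  rw [Metric.tendstoUniformlyOn_iff]
  intro ε hε
  set R : ℝ := (1+r)/2 with hRdef
  have hR0 : 0 < R := by rw [hRdef]; linarith
  have hR1 : R < 1 := by rw [hRdef]; linarith
  have hrR : r < R := by rw [hRdef]; linarith
  set q : ℝ := r / R with hqdef
  have hq0 : 0 ≤ q := div_nonneg hr0 hR0.le
  have hq1 : q < 1 := (div_lt_one hR0).mpr hrR
  have htail : Tendsto (fun N : ℕ => (2 * q^N) * (1-q)⁻¹) atTop (𝓝 0) := by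
    have h := tendsto_pow_atTop_nhds_zero_of_lt_one hq0 hq1
    simpa using ((h.const_mul 2).mul_const (1-q)⁻¹)
  obtain ⟨N, hN⟩ := (htail.eventually (gt_mem_nhds (half_pos hε))).exists
  have hfin : Tendsto (fun m => ∑ k ∈ Finset.range N, ‖A k - a (t m) k‖) atTop (𝓝 0) := by
    have hone : ∀ k, Tendsto (fun m => ‖A k - a (t m) k‖) atTop (𝓝 0) := by
      intro k
      have h := ((hcoord k).const_sub (A k)).norm
      simpa using h
    have hsum0 := tendsto_finset_sum (Finset.range N) (fun k _ => hone k)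
    simpa using hsum0
  filter_upwards [hfin.eventually (gt_mem_nhds (half_pos hε))] with m hm
  intro z hzr
  rw [mem_closedBall, dist_eq_norm, sub_zero] at hzr
  have hz1 : ‖z‖ < 1 := lt_of_le_of_lt hzr hr1
  have hdiffsum : HasSum (fun k => A k * z^k - a (t m) k * z^k) (f z - F (t m) z) :=
    (hfsum z hz1).sub (hsum (t m) z hz1)
  set g : ℕ → ℂ := fun k => A k * z^k - a (t m) k * z^k with hgdef
  have hgeq : ∀ k, ‖g k‖ = ‖A k - a (t m) k‖ * ‖z‖^k := by
    intro k
    rw [hgdef]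
    simp only
    rw [← sub_mul, norm_mul, norm_pow]
  have hgb2 : ∀ k, ‖g k‖ ≤ 2 * q^k := by
    intro k
    rw [hgeq k]
    have h2 : ‖A k - a (t m) k‖ ≤ 2 * (R⁻¹)^k := by
      calc ‖A k - a (t m) k‖ ≤ ‖A k‖ + ‖a (t m) k‖ := norm_sub_le _ _
        _ ≤ (R⁻¹)^k + (R⁻¹)^k := add_le_add (hAbnd k R hR0 hR1) (hbnd (t m) k R hR0 hR1)
        _ = 2*(R⁻¹)^k := by ring
    calc ‖A k - a (t m) k‖ * ‖z‖^k ≤ (2*(R⁻¹)^k) * r^k := by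
          have hzk : ‖z‖^k ≤ r^k := pow_le_pow_left₀ (norm_nonneg z) hzr k
          exact mul_le_mul h2 hzk (by positivity) (by positivity)
      _ = 2 * q^k := by
          rw [hqdef, div_pow, inv_pow]
          field_simp
  have hgb1 : ∀ k, ‖g k‖ ≤ ‖A k - a (t m) k‖ := by
    intro k
    rw [hgeq k]
    have hzk : ‖z‖^k ≤ 1 := pow_le_one₀ (norm_nonneg z) (le_of_lt hz1)
    calc ‖A k - a (t m) k‖ * ‖z‖^k ≤ ‖A k - a (t m) k‖ * 1 := by gcongr
      _ = _ := mul_one _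
  have hmaj : ∀ i : ℕ, ‖g (i+N)‖ ≤ (2*q^N) * q^i := by
    intro i
    calc ‖g (i+N)‖ ≤ 2*q^(i+N) := hgb2 _
      _ = (2*q^N)*q^i := by rw [pow_add]; ring
  have hgeo : Summable (fun i : ℕ => (2*q^N)*q^i) :=
    (summable_geometric_of_lt_one hq0 hq1).mul_left _
  have htailsum : Summable (fun i : ℕ => ‖g (i + N)‖) :=
    Summable.of_nonneg_of_le (fun i => norm_nonneg _) hmaj hgeo
  have htailbound : (∑' i : ℕ, ‖g (i+N)‖) ≤ 2 * q^N * (1-q)⁻¹ := by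
    calc (∑' i : ℕ, ‖g (i+N)‖) ≤ ∑' i : ℕ, (2*q^N)*q^i := Summable.tsum_le_tsum hmaj htailsum hgeo
      _ = (2*q^N) * (1-q)⁻¹ := by
          rw [tsum_mul_left, tsum_geometric_of_lt_one hq0 hq1]
  have htsum : f z - F (t m) z = (∑ k ∈ Finset.range N, g k) + ∑' i : ℕ, g (i + N) := by
    rw [← hdiffsum.tsum_eq]
    exact (Summable.sum_add_tsum_nat_add N hdiffsum.summable).symm
  calc dist (f z) (F (t m) z) = ‖f z - F (t m) z‖ := by rw [dist_eq_norm]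
    _ ≤ ‖∑ k ∈ Finset.range N, g k‖ + ‖∑' i : ℕ, g (i+N)‖ := by
        rw [htsum]; exact norm_add_le _ _
    _ ≤ (∑ k ∈ Finset.range N, ‖A k - a (t m) k‖) + (2*q^N)*(1-q)⁻¹ := by
        apply add_le_add
        · exact (norm_sum_le _ _).trans (Finset.sum_le_sum fun k _ => hgb1 k)
        · exact (norm_tsum_le_tsum_norm htailsum).trans htailbound
    _ < ε/2 + ε/2 := add_lt_add hm hN
    _ = ε := add_halves ε

lemma hurwitz_ne {G : ℕ → ℂ → ℂ} {f : ℂ → ℂ}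
    (hG : ∀ m, DifferentiableOn ℂ (G m) (ball 0 1))
    (hTLU : TendstoLocallyUniformlyOn G f atTop (ball 0 1))
    (hf : DifferentiableOn ℂ f (ball 0 1))
    {w : ℂ} {wm : ℕ → ℂ} (hwm : Tendsto wm atTop (𝓝 w))
    (hne : ∀ m, ∀ z ∈ ball (0:ℂ) 1, G m z ≠ wm m)
    (hnc : ¬ ∀ z ∈ ball (0:ℂ) 1, f z = w)
    {z₀ : ℂ} (hz₀ : z₀ ∈ ball (0:ℂ) 1) : f z₀ ≠ w := by
  intro hfz₀
  -- the zero of f - w at z₀ is isolated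
  have hball : IsPreconnected (ball (0:ℂ) 1) := (convex_ball 0 1).isPreconnected
  have hfan : AnalyticOnNhd ℂ (fun z => f z - w) (ball 0 1) :=
    (hf.analyticOnNhd isOpen_ball).sub analyticOnNhd_const
  have hiso : ∀ᶠ y in 𝓝[≠] z₀, f y - w ≠ 0 := by
    rcases (hfan z₀ hz₀).eventually_eq_zero_or_eventually_ne_zero with h | h
    · exfalso
      apply hnc
      intro z hz
      have := hfan.eqOn_zero_of_preconnected_of_eventuallyEq_zero hball hz₀ h hz
      simpa [sub_eq_zero] using this
    · exact h
  have hiso' : ∀ᶠ y in 𝓝 z₀, y ≠ z₀ → f y ≠ w := by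
    have := eventually_nhdsWithin_iff.mp hiso
    filter_upwards [this] with y hy hyne
    intro hc
    exact hy (by simpa using hyne) (by rw [hc, sub_self])
  obtain ⟨U, hUnhds, hU⟩ := hiso'.exists_mem
  -- choose a small closed ball inside U ∩ ball 0 1
  obtain ⟨s, hs0, hsU⟩ := Metric.mem_nhds_iff.mp (inter_mem hUnhds (isOpen_ball.mem_nhds hz₀))
  set s' : ℝ := min (s/2) ((1 - ‖z₀‖)/2) with hs'def
  have hz₀n : ‖z₀‖ < 1 := by simpa [mem_ball, dist_eq_norm] using hz₀
  have hs'0 : 0 < s' := by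
    apply lt_min (by linarith) (by linarith)
  have hcb : closedBall z₀ s' ⊆ U ∩ ball 0 1 := by
    intro x hx
    apply hsU
    rw [mem_closedBall] at hx
    rw [mem_ball]
    calc dist x z₀ ≤ s' := hx
      _ ≤ s/2 := min_le_left _ _
      _ < s := by linarith
  have hcbball : closedBall z₀ s' ⊆ ball (0:ℂ) 1 := fun x hx => (hcb hx).2
  -- minimum of ‖f - w‖ on the sphere
  have hsph : sphere z₀ s' ⊆ closedBall z₀ s' := sphere_subset_closedBall
  have hsphcpt : IsCompact (sphere z₀ s') := isCompact_sphere _ _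
  have hsphne : (sphere z₀ s').Nonempty := NormedSpace.sphere_nonempty.mpr hs'0.le
  have hfc : ContinuousOn (fun y => ‖f y - w‖) (sphere z₀ s') :=
    ((hf.continuousOn.mono (fun x hx => hcbball (hsph hx))).sub continuousOn_const).norm
  obtain ⟨y₀, hy₀, hy₀min⟩ := hsphcpt.exists_isMinOn hsphne hfc
  set δ : ℝ := ‖f y₀ - w‖ with hδdef
  have hδ0 : 0 < δ := by
    rw [hδdef, norm_pos_iff, sub_ne_zero]
    apply hU y₀ (hcb (hsph hy₀)).1
    intro hc
    rw [hc] at hy₀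
    simp only [mem_sphere, dist_self] at hy₀
    exact hs'0.ne hy₀
  have hδmin : ∀ y ∈ sphere z₀ s', δ ≤ ‖f y - w‖ := fun y hy => hy₀min hy
  -- uniform convergence on the sphere
  have hTU : TendstoUniformlyOn G f atTop (sphere z₀ s') := by
    have := (tendstoLocallyUniformlyOn_iff_forall_isCompact isOpen_ball).mp hTLU
    exact this (sphere z₀ s') (fun x hx => hcbball (hsph hx)) hsphcpt
  have hev1 : ∀ᶠ m in atTop, ∀ y ∈ sphere z₀ s', dist (f y) (G m y) < δ/4 :=
    (Metric.tendstoUniformlyOn_iff.mp hTU) (δ/4) (by linarith)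
  have hev2 : ∀ᶠ m in atTop, dist (wm m) w < δ/4 :=
    (Metric.tendsto_nhds.mp hwm) (δ/4) (by linarith)
  -- G m z₀ - wm m tends to 0
  have hptw : Tendsto (fun m => G m z₀) atTop (𝓝 (f z₀)) := hTLU.tendsto_at hz₀
  have hdiff0 : Tendsto (fun m => G m z₀ - wm m) atTop (𝓝 0) := by
    have := hptw.sub hwm
    rwa [hfz₀, sub_self] at this
  have hev3 : ∀ᶠ m in atTop, ‖G m z₀ - wm m‖ < δ/2 := by
    have := (Metric.tendsto_nhds.mp hdiff0) (δ/2) (by linarith)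
    filter_upwards [this] with m hm
    simpa [dist_eq_norm] using hm
  obtain ⟨m, h1, h2, h3⟩ := (hev1.and (hev2.and hev3)).exists
  -- maximum principle for the reciprocal
  set H : ℂ → ℂ := fun y => (G m y - wm m)⁻¹ with hHdef
  have hGd : DifferentiableOn ℂ (fun y => G m y - wm m) (ball 0 1) :=
    (hG m).sub (differentiableOn_const _)
  have hHd : DifferentiableOn ℂ H (ball 0 1) := by
    apply hGd.inv
    intro y hy
    rw [sub_ne_zero]
    exact hne m y hy
  have hHdc : DiffContOnCl ℂ H (ball z₀ s') := by
    refine ⟨hHd.mono (fun x hx => hcbball (ball_subset_closedBall hx)), ?_⟩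
    have : closure (ball z₀ s') = closedBall z₀ s' := closure_ball z₀ hs'0.ne'
    rw [this]
    exact hHd.continuousOn.mono hcbball
  have hfront : ∀ y ∈ frontier (ball z₀ s'), ‖H y‖ ≤ (δ/2)⁻¹ := by
    intro y hy
    rw [frontier_ball z₀ hs'0.ne'] at hy
    have hGy : δ/2 ≤ ‖G m y - wm m‖ := by
      have e1 : ‖f y - w‖ ≤ ‖f y - G m y‖ + ‖G m y - wm m‖ + ‖wm m - w‖ := by
        have : f y - w = (f y - G m y) + (G m y - wm m) + (wm m - w) := by ring
        rw [this]
        exact (norm_add_le _ _).trans (add_le_add (norm_add_le _ _) le_rfl)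
      have e2 : ‖f y - G m y‖ < δ/4 := by
        have := h1 y hy
        rwa [dist_eq_norm] at this
      have e3 : ‖wm m - w‖ < δ/4 := by
        have := h2
        rwa [dist_eq_norm] at this
      have e4 := hδmin y hy
      linarith
    rw [hHdef]
    simp only [norm_inv]
    apply inv_anti₀ (by linarith) hGy
  have hmax := Complex.norm_le_of_forall_mem_frontier_norm_le isBounded_ball hHdc hfront
    (z := z₀) (by rw [closure_ball z₀ hs'0.ne']; exact mem_closedBall_self hs'0.le)
  -- contradiction
  have : δ/2 ≤ ‖G m z₀ - wm m‖ := by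
    have hne0 : G m z₀ - wm m ≠ 0 := sub_ne_zero.mpr (hne m z₀ hz₀)
    rw [hHdef] at hmax
    simp only [norm_inv] at hmax
    rwa [inv_le_inv₀ (norm_pos_iff.mpr hne0) (by positivity)] at hmax
  linarith

end
end CapacityAux

open CapacityAux

/-- **Continuity of capacity under Hausdorff convergence of curves.**  Let
`β_n, β : [0,1] → closure 𝔻 \ {0}` be curves with `β_n[0,1] → β[0,1]` in the Hausdorff
metric.  Then the capacity of `β_n[0,1]` from `0` tends to the capacity of `β[0,1]` from
`0`, where the capacity of a compact `K` is `log ψ'(0)` for `ψ` the normalized conformal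
map of the component of `0` in `𝔻 \ K` onto `𝔻`. -/
theorem capacity_continuous_hausdorff
    (βn : ℕ → I → ℂ) (β : I → ℂ)
    (hβnCont : ∀ n, Continuous (βn n)) (hβCont : Continuous β)
    (hβnRange : ∀ n t, ‖βn n t‖ ≤ 1 ∧ βn n t ≠ 0)
    (hβRange : ∀ t, ‖β t‖ ≤ 1 ∧ β t ≠ 0)
    (hHaus : Tendsto (fun n => Metric.hausdorffDist (range (βn n)) (range β))
      atTop (𝓝 0))
    (ψn : ℕ → ℂ → ℂ) (dn : ℕ → ℝ) (ψ : ℂ → ℂ) (d : ℝ)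
    (hψn : ∀ n, IsCapacityMap (range (βn n)) (ψn n) (dn n))
    (hψ : IsCapacityMap (range β) ψ d) :
    Tendsto (fun n => Real.log (dn n)) atTop (𝓝 (Real.log d)) := by
  classical
  set K : Set ℂ := range β with hKdef
  set Kn : ℕ → Set ℂ := fun n => range (βn n) with hKndef
  have hd : 0 < d := hψ.1
  have hdn : ∀ n, 0 < dn n := fun n => (hψn n).1
  have hKcpt : IsCompact K := isCompact_range hβCont
  have hKncpt : ∀ n, IsCompact (Kn n) := fun n => isCompact_range (hβnCont n)
  have hKne : K.Nonempty := range_nonempty _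
  have hKnne : ∀ n, (Kn n).Nonempty := fun n => range_nonempty _
  have h0K : (0:ℂ) ∉ K := by rintro ⟨t, ht⟩; exact (hβRange t).2 ht
  have h0Kn : ∀ n, (0:ℂ) ∉ Kn n := fun n => by rintro ⟨t, ht⟩; exact (hβnRange n t).2 ht
  have hedist : ∀ n, EMetric.hausdorffEdist (Kn n) K ≠ ⊤ := fun n =>
    hausdorffEdist_ne_top_of_nonempty_of_bounded (hKnne n) hKne (hKncpt n).isBounded
      hKcpt.isBounded
  obtain ⟨φ, hφdiff, hφ0, hφder, hφmem, hφr⟩ := exists_inverse hKcpt.isClosed h0K hψ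
  have hch : ∀ n, ∃ φ' : ℂ → ℂ, DifferentiableOn ℂ φ' (ball 0 1) ∧ φ' 0 = 0 ∧
      HasDerivAt φ' ((dn n : ℂ))⁻¹ 0 ∧
      (∀ w ∈ ball (0:ℂ) 1, φ' w ∈ connectedComponentIn (ball (0:ℂ) 1 \ Kn n) 0) ∧
      (∀ w ∈ ball (0:ℂ) 1, ψn n (φ' w) = w) :=
    fun n => exists_inverse (hKncpt n).isClosed (h0Kn n) (hψn n)
  choose φn hφndiff hφn0 hφnder hφnmem hφnr using hch
  -- upper bound: eventually dn n ≤ d / r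
  have keyUB : ∀ r : ℝ, 0 < r → r < 1 → ∀ᶠ n in atTop, dn n ≤ d / r := by
    intro r hr0 hr1
    set P : Set ℂ := φ '' closedBall 0 r with hPdef
    have hsubb : closedBall (0:ℂ) r ⊆ ball 0 1 := closedBall_subset_ball hr1
    have hPsub : ∀ p ∈ P, p ∈ connectedComponentIn (ball (0:ℂ) 1 \ K) 0 := by
      rintro p ⟨z, hz, rfl⟩; exact hφmem z (hsubb hz)
    have hPcpt : IsCompact P :=
      (isCompact_closedBall _ _).image_of_continuousOn (hφdiff.continuousOn.mono hsubb)
    have hP0 : (0:ℂ) ∈ P := ⟨0, mem_closedBall_self hr0.le, hφ0⟩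
    have hPconn : IsPreconnected P :=
      (convex_closedBall (0:ℂ) r).isPreconnected.image φ (hφdiff.continuousOn.mono hsubb)
    have hcont : ContinuousOn (fun p => infDist p K) P := (continuous_infDist_pt K).continuousOn
    obtain ⟨p₀, hp₀, hp₀min⟩ := hPcpt.exists_isMinOn ⟨0, hP0⟩ hcont
    have hδ0 : 0 < infDist p₀ K := by
      have hp₀K : p₀ ∉ K := (connectedComponentIn_subset _ _ (hPsub p₀ hp₀)).2
      rcases (infDist_nonneg : 0 ≤ infDist p₀ K).lt_or_eq with h | h
      · exact h
      · exfalso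
        exact hp₀K (((hKcpt.isClosed.mem_iff_infDist_zero hKne).mpr h.symm))
    filter_upwards [hHaus.eventually (gt_mem_nhds hδ0)] with n hn
    have hPKn : ∀ p ∈ P, p ∉ Kn n := by
      intro p hp hpK
      have h1 : infDist p K ≤ hausdorffDist (Kn n) K :=
        infDist_le_hausdorffDist_of_mem hpK (hedist n)
      have h2 : infDist p₀ K ≤ infDist p K := hp₀min hp
      have h3 : hausdorffDist (Kn n) K < infDist p₀ K := hn
      linarith
    have hPDn : P ⊆ connectedComponentIn (ball (0:ℂ) 1 \ Kn n) 0 := by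
      apply hPconn.subset_connectedComponentIn hP0
      intro p hp
      exact ⟨(connectedComponentIn_subset _ _ (hPsub p hp)).1, hPKn p hp⟩
    set g : ℂ → ℂ := fun z => φ ((r:ℂ) * z) with hgdef
    have hgmul : ∀ z ∈ ball (0:ℂ) 1, (r:ℂ) * z ∈ closedBall (0:ℂ) r := by
      intro z hz
      rw [mem_closedBall, dist_eq_norm, sub_zero, norm_mul, Complex.norm_real,
        Real.norm_eq_abs, abs_of_pos hr0]
      have hz1 : ‖z‖ < 1 := by simpa [mem_ball, dist_eq_norm] using hz
      nlinarith [norm_nonneg z]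
    have hgdiff : DifferentiableOn ℂ g (ball 0 1) := by
      apply hφdiff.comp
      · exact (differentiable_id.const_mul ((r:ℂ))).differentiableOn
      · exact fun z hz => hsubb (hgmul z hz)
    have hgder : HasDerivAt g ((d:ℂ)⁻¹ * r) 0 := by
      have h1 : HasDerivAt (fun z : ℂ => (r:ℂ) * z) (r:ℂ) 0 := by
        simpa using (hasDerivAt_id (0:ℂ)).const_mul (r:ℂ)
      have h2 : HasDerivAt φ (d:ℂ)⁻¹ ((r:ℂ) * 0) := by rw [mul_zero]; exact hφder
      exact h2.comp 0 h1
    have hg0 : g 0 = 0 := by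
      rw [hgdef]; simp [hφ0]
    have hgmaps : MapsTo g (ball 0 1) (connectedComponentIn (ball (0:ℂ) 1 \ Kn n) 0) :=
      fun z hz => hPDn ⟨(r:ℂ)*z, hgmul z hz, rfl⟩
    have hsch := schwarz_step (hψn n) g _ hgdiff hgder hg0 hgmaps
    have hnorm : ‖(d:ℂ)⁻¹ * (r:ℂ)‖ = d⁻¹ * r := by
      rw [norm_mul, norm_inv, Complex.norm_real, Complex.norm_real, Real.norm_eq_abs,
        Real.norm_eq_abs, abs_of_pos hd, abs_of_pos hr0]
    rw [hnorm] at hsch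
    rw [le_div_iff₀ hr0]
    have heq : dn n * r = dn n * (d⁻¹ * r) * d := by field_simp
    rw [heq]
    calc dn n * (d⁻¹*r) * d ≤ 1 * d := mul_le_mul_of_nonneg_right hsch hd.le
      _ = d := one_mul d
  -- main subsequence argument
  apply tendsto_of_subseq_tendsto
  intro ns hns
  have hbd : ∀ m, ∀ z ∈ ball (0:ℂ) 1, ‖φn (ns m) z‖ ≤ 1 := by
    intro m z hz
    have h1 := hφnmem (ns m) z hz
    have h2 := (connectedComponentIn_subset _ _ h1).1
    rw [mem_ball, dist_eq_norm, sub_zero] at h2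
    linarith
  obtain ⟨f, t, htmono, hTLU⟩ := montel (fun m => φn (ns m)) (fun m => hφndiff (ns m)) hbd
  set u : ℕ → ℕ := fun m => ns (t m) with hudef
  have hu : Tendsto u atTop atTop := hns.comp htmono.tendsto_atTop
  refine ⟨t, ?_⟩
  suffices hdd : Tendsto (fun m => dn (u m)) atTop (𝓝 d) by
    have hlog := (Real.continuousAt_log (ne_of_gt hd)).tendsto.comp hdd
    exact hlog
  have hTLU' : TendstoLocallyUniformlyOn (fun m => φn (u m)) f atTop (ball 0 1) := hTLU
  have h0b : (0:ℂ) ∈ ball (0:ℂ) 1 := by simp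
  have hfdiff : DifferentiableOn ℂ f (ball 0 1) :=
    hTLU'.differentiableOn (Eventually.of_forall (fun m => hφndiff (u m))) isOpen_ball
  have hf0 : f 0 = 0 := by
    have h := hTLU'.tendsto_at h0b
    have h2 : Tendsto (fun m => φn (u m) 0) atTop (𝓝 0) := by
      simpa [hφn0] using (tendsto_const_nhds : Tendsto (fun _ : ℕ => (0:ℂ)) atTop (𝓝 0))
    exact tendsto_nhds_unique h h2
  have hderiv : Tendsto (fun m => ((dn (u m) : ℂ))⁻¹) atTop (𝓝 (deriv f 0)) := by
    have h := (hTLU'.deriv (Eventually.of_forall (fun m => hφndiff (u m)))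
      isOpen_ball).tendsto_at h0b
    have he : ∀ m, deriv (φn (u m)) 0 = ((dn (u m):ℂ))⁻¹ := fun m => (hφnder (u m)).deriv
    simpa [Function.comp, he] using h
  have hreal : Tendsto (fun m => (dn (u m))⁻¹) atTop (𝓝 (deriv f 0).re) := by
    have h := (Complex.continuous_re.tendsto _).comp hderiv
    have he : (Complex.re ∘ fun m => ((dn (u m):ℂ))⁻¹) = fun m => (dn (u m))⁻¹ := by
      funext m
      simp only [Function.comp]
      rw [← Complex.ofReal_inv, Complex.ofReal_re]
    rwa [he] at h
  set c : ℝ := (deriv f 0).re with hcdef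
  have hcomplex : deriv f 0 = (c : ℂ) := by
    have hmem : deriv f 0 ∈ range (Complex.ofReal) := by
      apply IsClosed.mem_of_tendsto Complex.isUniformEmbedding_ofReal.isClosedEmbedding.isClosed_range hderiv
      filter_upwards with m
      exact ⟨(dn (u m))⁻¹, by push_cast; rfl⟩
    obtain ⟨x, hx⟩ := hmem
    rw [← hx, hcdef, ← hx, Complex.ofReal_re]
  have hstep : ∀ r : ℝ, 0 < r → r < 1 → r / d ≤ c := by
    intro r hr0 hr1
    have hev' : ∀ᶠ m in atTop, r / d ≤ (dn (u m))⁻¹ := by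
      filter_upwards [hu.eventually (keyUB r hr0 hr1)] with m hm
      rw [div_le_iff₀ hd]
      rw [le_div_iff₀ hr0] at hm
      have h2 : (dn (u m))⁻¹ * (dn (u m) * r) ≤ (dn (u m))⁻¹ * d :=
        mul_le_mul_of_nonneg_left hm (inv_nonneg.mpr (hdn (u m)).le)
      rwa [← mul_assoc, inv_mul_cancel₀ (hdn (u m)).ne', one_mul] at h2
    exact ge_of_tendsto hreal hev'
  have hclb : 1/d ≤ c := by
    by_contra hlt
    push_neg at hlt
    have hcd : c * d < 1 := by
      rwa [lt_div_iff₀ hd] at hlt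
    have hc0 : 0 < c := lt_of_lt_of_le (div_pos (by norm_num) hd) (hstep (1/2) (by norm_num) (by norm_num))
    set r : ℝ := (c * d + 1)/2 with hrdef
    have hr0 : 0 < r := by rw [hrdef]; nlinarith
    have hr1 : r < 1 := by rw [hrdef]; nlinarith
    have h := hstep r hr0 hr1
    rw [div_le_iff₀ hd] at h
    rw [hrdef] at h
    nlinarith
  have hc0 : 0 < c := lt_of_lt_of_le (div_pos one_pos hd) hclb
  have hcne : deriv f 0 ≠ 0 := by
    rw [hcomplex]
    exact_mod_cast hc0.ne'
  -- f maps the ball strictly inside the ball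
  have hbdu : ∀ m, ∀ z ∈ ball (0:ℂ) 1, ‖φn (u m) z‖ ≤ 1 := fun m => hbd (t m)
  have hfle : ∀ z ∈ ball (0:ℂ) 1, ‖f z‖ ≤ 1 := by
    intro z hz
    exact le_of_tendsto (hTLU'.tendsto_at hz).norm
      (Eventually.of_forall fun m => hbdu m z hz)
  have hflt : ∀ z ∈ ball (0:ℂ) 1, ‖f z‖ < 1 := by
    intro z hz
    rcases lt_or_eq_of_le (hfle z hz) with h | h
    · exact h
    · exfalso
      have hmax : IsMaxOn (norm ∘ f) (ball (0:ℂ) 1) z := by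
        intro y hy
        simp only [Function.comp]
        rw [h]
        exact hfle y hy
      have heqon := Complex.eqOn_of_isPreconnected_of_isMaxOn_norm
        (convex_ball (0:ℂ) 1).isPreconnected isOpen_ball hfdiff hz hmax
      have hev : f =ᶠ[𝓝 (0:ℂ)] (fun _ => f z) := by
        filter_upwards [isOpen_ball.mem_nhds h0b] with y hy using heqon hy
      have hd0 : deriv f 0 = 0 := by
        rw [hev.deriv_eq]
        exact deriv_const _ _
      exact hcne hd0
  -- f avoids K
  have hfavoid : ∀ z ∈ ball (0:ℂ) 1, f z ∉ K := by
    intro z hz hzK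
    set w : ℂ := f z with hwdef
    have hwm : ∀ m : ℕ, ∃ y ∈ Kn (u m), infDist w (Kn (u m)) = dist w y := fun m =>
      (hKncpt (u m)).exists_infDist_eq_dist (hKnne (u m)) w
    choose wm hwmK hwmd using hwm
    have hwmtend : Tendsto wm atTop (𝓝 w) := by
      rw [tendsto_iff_dist_tendsto_zero]
      have hle : ∀ m, dist (wm m) w ≤ hausdorffDist (Kn (u m)) K := by
        intro m
        rw [dist_comm, ← hwmd m]
        have hed : EMetric.hausdorffEdist K (Kn (u m)) ≠ ⊤ := by
          rw [EMetric.hausdorffEdist, Metric.hausdorffEDist_comm]; exact hedist (u m)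
        have h1 : infDist w (Kn (u m)) ≤ hausdorffDist K (Kn (u m)) :=
          infDist_le_hausdorffDist_of_mem hzK hed
        rwa [hausdorffDist_comm] at h1
      exact squeeze_zero (fun m => dist_nonneg) hle (hHaus.comp hu)
    have hne : ∀ m, ∀ y ∈ ball (0:ℂ) 1, φn (u m) y ≠ wm m := by
      intro m y hy hc
      have h1 := hφnmem (u m) y hy
      have h2 := (connectedComponentIn_subset _ _ h1).2
      rw [hc] at h2
      exact h2 (hwmK m)
    have hnc : ¬ ∀ z' ∈ ball (0:ℂ) 1, f z' = w := by
      intro hall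
      have h1 := hall 0 h0b
      rw [hf0] at h1
      rw [← h1] at hzK
      exact h0K hzK
    exact hurwitz_ne (fun m => hφndiff (u m)) hTLU' hfdiff hwmtend hne hnc hz rfl
  -- f maps into the component of 0
  have hmapsD : MapsTo f (ball 0 1) (connectedComponentIn (ball (0:ℂ) 1 \ K) 0) := by
    have himg : f '' ball 0 1 ⊆ connectedComponentIn (ball (0:ℂ) 1 \ K) 0 := by
      apply IsPreconnected.subset_connectedComponentIn
      · exact (convex_ball (0:ℂ) 1).isPreconnected.image f hfdiff.continuousOn
      · exact ⟨0, h0b, hf0⟩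
      · rintro p ⟨y, hy, rfl⟩
        refine ⟨?_, hfavoid y hy⟩
        rw [mem_ball, dist_eq_norm, sub_zero]
        exact hflt y hy
    exact fun y hy => himg ⟨y, hy, rfl⟩
  have hfat : HasDerivAt f (deriv f 0) 0 :=
    (hfdiff.differentiableAt (isOpen_ball.mem_nhds h0b)).hasDerivAt
  have hub := schwarz_step hψ f (deriv f 0) hfdiff hfat hf0 hmapsD
  rw [hcomplex] at hub
  rw [Complex.norm_real, Real.norm_eq_abs, abs_of_pos hc0] at hub
  have hcub : c ≤ 1/d := by
    rw [le_div_iff₀ hd]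
    linarith [hub]
  have hceq : c = 1/d := le_antisymm hcub hclb
  have hlim : Tendsto (fun m => dn (u m)) atTop (𝓝 (c⁻¹)) := by
    have h := hreal.inv₀ hc0.ne'
    have he : (fun m => ((dn (u m))⁻¹)⁻¹) = fun m => dn (u m) := by
      funext m; rw [inv_inv]
    rwa [he] at h
  rw [hceq] at hlim
  simpa [one_div, inv_inv] using hlim
end

section
/- Let L be a two-dimensional lattice, X an L-valued bounded step distribution generating an irreducible aperiodic mean-zero random walk S_n with identity covariance, and let a(z) := Σ_{j=0}^∞ (P⁰[S_j = 0] − P⁰[S_j = −z]) be the potential kernel. Then Δ_X a(z) = 1 if z = 0 and Δ_X a(z) = 0 otherwise, where Δ_X f(z) := E[f(z+X)] − f(z). -/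
open Filter
open scoped ENNReal Topology

/-- `n`-step transition probabilities of the random walk with step distribution `p`
(started at `0`), as a convolution power. -/
noncomputable def stepN (p : PMF (ℤ × ℤ)) : ℕ → (ℤ × ℤ) → ℝ≥0∞
  | 0, z => if z = 0 then 1 else 0
  | n + 1, z => ∑' y : ℤ × ℤ, stepN p n y * p (z - y)


lemma stepN_tsum (p : PMF (ℤ × ℤ)) : ∀ n, ∑' z, stepN p n z = 1
  | 0 => by simp [stepN]
  | n + 1 => by
    have h : ∀ y : ℤ × ℤ, ∑' z : ℤ × ℤ, p (z - y) = 1 := fun y => by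
      calc ∑' z : ℤ × ℤ, p (z - y) = ∑' w : ℤ × ℤ, p w := (Equiv.subRight y).tsum_eq (fun w => p w)
        _ = 1 := p.tsum_coe
    simp only [stepN]
    rw [ENNReal.tsum_comm]
    simp_rw [ENNReal.tsum_mul_left, h, mul_one]
    exact stepN_tsum p n

lemma stepN_le_one (p : PMF (ℤ × ℤ)) (n : ℕ) (z : ℤ × ℤ) : stepN p n z ≤ 1 := by
  rw [← stepN_tsum p n]; exact ENNReal.le_tsum z

lemma stepN_ne_top (p : PMF (ℤ × ℤ)) (n : ℕ) (z : ℤ × ℤ) : stepN p n z ≠ ⊤ :=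
  ne_top_of_le_ne_top ENNReal.one_ne_top (stepN_le_one p n z)

lemma stepN_succ' (p : PMF (ℤ × ℤ)) (n : ℕ) (z : ℤ × ℤ) :
    stepN p (n + 1) z = ∑' x : ℤ × ℤ, stepN p n (z - x) * p x := by
  have := (Equiv.subLeft z).tsum_eq (fun y => stepN p n y * p (z - y))
  simp only [Equiv.subLeft_apply, sub_sub_cancel] at this
  rw [stepN, ← this]

/-- The discrete Laplacian associated with the step distribution `p`:
`Δ_X f(z) = E[f(z+X)] − f(z)`. -/
noncomputable def discLap (p : PMF (ℤ × ℤ)) (f : (ℤ × ℤ) → ℝ) (z : ℤ × ℤ) : ℝ :=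
  (∑' x : ℤ × ℤ, (p x).toReal * f (z + x)) - f z

/-- **The potential kernel is the fundamental solution of the discrete Laplacian.**
Let `X` be a bounded-support step distribution on the lattice `ℤ²` generating an
irreducible aperiodic mean-zero random walk with identity covariance, and let
`a(z) = Σ_{j≥0} (P⁰[S_j = 0] − P⁰[S_j = −z])` be the potential kernel (the series
converging for such walks).  Then `Δ_X a(0) = 1` and `Δ_X a(z) = 0` for `z ≠ 0`. -/
theorem potential_kernel_laplacian
    (p : PMF (ℤ × ℤ))
    (hbdd : {x : ℤ × ℤ | p x ≠ 0}.Finite)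
    (hirr : ∀ z : ℤ × ℤ, ∃ n : ℕ, 0 < stepN p n z)
    (haper : ∃ N : ℕ, ∀ n ≥ N, 0 < stepN p n 0)
    (hmean1 : (∑' x : ℤ × ℤ, (p x).toReal * (x.1 : ℝ)) = 0)
    (hmean2 : (∑' x : ℤ × ℤ, (p x).toReal * (x.2 : ℝ)) = 0)
    (hcov11 : (∑' x : ℤ × ℤ, (p x).toReal * ((x.1 : ℝ) * (x.1 : ℝ))) = 1)
    (hcov22 : (∑' x : ℤ × ℤ, (p x).toReal * ((x.2 : ℝ) * (x.2 : ℝ))) = 1)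
    (hcov12 : (∑' x : ℤ × ℤ, (p x).toReal * ((x.1 : ℝ) * (x.2 : ℝ))) = 0)
    (a : (ℤ × ℤ) → ℝ)
    (ha : ∀ z : ℤ × ℤ, Tendsto
      (fun N => ∑ j ∈ Finset.range N, ((stepN p j 0).toReal - (stepN p j (-z)).toReal))
      atTop (𝓝 (a z))) :
    discLap p a 0 = 1 ∧ ∀ z : ℤ × ℤ, z ≠ 0 → discLap p a z = 0 := by
  classical
  set F := hbdd.toFinset with hFdef
  have hpF : ∀ x ∉ F, p x = 0 := by
    intro x hx
    by_contra h
    exact hx (hbdd.mem_toFinset.2 h)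
  -- convolution identity in ℝ
  set v : ℕ → (ℤ × ℤ) → ℝ := fun n z => (stepN p n z).toReal with hv
  have hconv : ∀ n z, v (n+1) z = ∑ x ∈ F, (p x).toReal * v n (z - x) := by
    intro n z
    have h1 : stepN p (n+1) z = ∑ x ∈ F, stepN p n (z - x) * p x := by
      rw [stepN_succ']
      exact tsum_eq_sum (fun x hx => by rw [hpF x hx, mul_zero])
    have h2 : ∀ x ∈ F, stepN p n (z - x) * p x ≠ ⊤ :=
      fun x _ => ENNReal.mul_ne_top (stepN_ne_top p n _) (p.apply_ne_top x)
    simp only [hv, h1, ENNReal.toReal_sum h2, ENNReal.toReal_mul, mul_comm]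
  have hp1 : ∑ x ∈ F, (p x).toReal = 1 := by
    have h1 : ∑' x, p x = ∑ x ∈ F, p x := tsum_eq_sum (fun x hx => hpF x hx)
    have h2 := p.tsum_coe
    rw [h1] at h2
    have := congrArg ENNReal.toReal h2
    rwa [ENNReal.toReal_sum (fun x _ => p.apply_ne_top x), ENNReal.toReal_one] at this
  -- the partial sums
  set A : ℕ → (ℤ × ℤ) → ℝ := fun N z => ∑ j ∈ Finset.range N, (v j 0 - v j (-z)) with hA
  have htel : ∀ N z, (∑ x ∈ F, (p x).toReal * A N (z + x)) - A N z = v 0 (-z) - v N (-z) := by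
    intro N z
    have key : ∀ j, (∑ x ∈ F, (p x).toReal * (v j 0 - v j (-(z + x)))) - (v j 0 - v j (-z))
        = v j (-z) - v (j+1) (-z) := by
      intro j
      have e1 : ∀ x : ℤ × ℤ, -(z + x) = -z - x := by intro x; ring
      simp only [e1, mul_sub]
      rw [Finset.sum_sub_distrib, ← Finset.sum_mul, hp1, one_mul, hconv j (-z)]
      ring
    calc (∑ x ∈ F, (p x).toReal * A N (z + x)) - A N z
        = ∑ j ∈ Finset.range N,
            ((∑ x ∈ F, (p x).toReal * (v j 0 - v j (-(z + x)))) - (v j 0 - v j (-z))) := by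
          have l1 : (∑ x ∈ F, (p x).toReal * A N (z + x))
              = ∑ j ∈ Finset.range N, ∑ x ∈ F, (p x).toReal * (v j 0 - v j (-(z + x))) := by
            simp only [hA, Finset.mul_sum]
            rw [Finset.sum_comm]
          rw [l1, hA, ← Finset.sum_sub_distrib]
      _ = ∑ j ∈ Finset.range N, (v j (-z) - v (j+1) (-z)) := by
          exact Finset.sum_congr rfl (fun j _ => key j)
      _ = v 0 (-z) - v N (-z) := Finset.sum_range_sub' (fun j => v j (-z)) N
  -- discLap as a limit
  have hlap : ∀ z, Tendsto (fun N => v 0 (-z) - v N (-z)) atTop (𝓝 (discLap p a z)) := by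
    intro z
    have h1 : discLap p a z = (∑ x ∈ F, (p x).toReal * a (z + x)) - a z := by
      unfold discLap
      congr 1
      exact tsum_eq_sum (fun x hx => by rw [hpF x hx, ENNReal.toReal_zero, zero_mul])
    have h2 : Tendsto (fun N => (∑ x ∈ F, (p x).toReal * A N (z + x)) - A N z) atTop
        (𝓝 ((∑ x ∈ F, (p x).toReal * a (z + x)) - a z)) := by
      apply Tendsto.sub _ (ha z)
      exact tendsto_finset_sum F (fun x _ => (ha (z + x)).const_mul _)
    rw [h1]
    exact h2.congr (fun N => htel N z)
  -- hence v N (-z) converges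
  have hvlim : ∀ z, Tendsto (fun N => v N (-z)) atTop (𝓝 (v 0 (-z) - discLap p a z)) := by
    intro z
    have := (tendsto_const_nhds (x := v 0 (-z)) (f := atTop)).sub (hlap z)
    simpa using this
  -- terms of convergent series tend to 0
  have hterm : ∀ z : ℤ × ℤ, Tendsto (fun j => v j 0 - v j (-z)) atTop (𝓝 0) := by
    intro z
    have h1 := ((ha z).comp (tendsto_add_atTop_nat 1)).sub (ha z)
    simp only [sub_self] at h1
    refine h1.congr (fun j => ?_)
    simp only [hA, hv, Function.comp, Finset.sum_range_succ]
    ring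
  -- the common limit c
  obtain ⟨c, hc⟩ : ∃ c : ℝ, c = v 0 0 - discLap p a 0 := ⟨_, rfl⟩
  have hv0 : Tendsto (fun N => v N 0) atTop (𝓝 c) := by
    have h := hvlim 0
    simp only [neg_zero] at h
    rwa [← hc] at h
  have hlimz : ∀ z : ℤ × ℤ, Tendsto (fun N => v N (-z)) atTop (𝓝 c) := by
    intro z
    have h := hv0.sub (hterm z)
    simp only [sub_zero] at h
    refine h.congr (fun N => by ring)
  have huniq : ∀ z : ℤ × ℤ, v 0 (-z) - discLap p a z = c := fun z =>
    tendsto_nhds_unique (hvlim z) (hlimz z)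
  have hcnonneg : 0 ≤ c :=
    ge_of_tendsto hv0 (Filter.Eventually.of_forall (fun N => ENNReal.toReal_nonneg))
  have hMc : ∀ M : ℕ, (M : ℝ) * c ≤ 1 := by
    intro M
    set w : ℕ → ℤ × ℤ := fun i => ((i : ℤ), 0) with hw
    have hwinj : Function.Injective w := by
      intro i j h
      simpa [hw, Prod.ext_iff] using h
    have hsum_le : ∀ N, ∑ i ∈ Finset.range M, v N (w i) ≤ 1 := by
      intro N
      have h1 : ∑ i ∈ Finset.range M, stepN p N (w i)
          = ∑ z ∈ (Finset.range M).image w, stepN p N z :=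
        (Finset.sum_image (fun i _ j _ h => hwinj h)).symm
      have h2 : ∑ z ∈ (Finset.range M).image w, stepN p N z ≤ 1 := by
        rw [← stepN_tsum p N]
        exact ENNReal.sum_le_tsum _
      rw [← h1] at h2
      have h3 := ENNReal.toReal_mono ENNReal.one_ne_top h2
      rw [ENNReal.toReal_sum (fun i _ => stepN_ne_top p N (w i)), ENNReal.toReal_one] at h3
      simpa [hv] using h3
    have hlim : Tendsto (fun N => ∑ i ∈ Finset.range M, v N (w i)) atTop
        (𝓝 (∑ _i ∈ Finset.range M, c)) := by
      refine tendsto_finset_sum _ (fun i _ => ?_)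
      have h := hlimz (-(w i))
      simpa using h
    have := le_of_tendsto hlim (Filter.Eventually.of_forall hsum_le)
    simpa [Finset.sum_const, nsmul_eq_mul] using this
  have hceq : c = 0 := by
    refine le_antisymm ?_ hcnonneg
    by_contra h
    push_neg at h
    obtain ⟨M, hM⟩ := exists_nat_gt (1 / c)
    have h2 := hMc M
    have h3 : (0:ℝ) < c := h
    have h4 : 1 < (M:ℝ) * c := by
      rw [← one_div_mul_cancel (ne_of_gt h3)]
      exact mul_lt_mul_of_pos_right hM h3
    linarith
  have hv00 : v 0 0 = 1 := by simp [hv, stepN]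
  constructor
  · have h := huniq 0
    simp only [neg_zero] at h
    rw [hv00, hceq] at h
    linarith
  · intro z hz
    have h := huniq z
    have hv0z : v 0 (-z) = 0 := by
      simp [hv, stepN, neg_eq_zero, hz]
    rw [hv0z, hceq] at h
    linarith
end
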